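/- arXiv:1809.10168 — 8 statements merged into one kernel-verified Lean document; each statement's English description precedes it below -/
import Mathlib

section
/- Let n and m be positive integers and s, t > 0. Let X and Y be independent real random variables, where X has the Gamma(n, s) distribution and Y has the Gamma(m, t) distribution. Then Pr[X ≤ Y] = I_p(n, m), where p = s/(s+t) and I_p(n, m) is the regularized incomplete beta function. -/
open MeasureTheory ProbabilityTheory

/-- The regularized incomplete beta function `I_p(n, m)` for positive integer
parameters `n, m`. -/
noncomputable def regIncBeta (n m : ℕ) (p : ℝ) : ℝ :=
  (Real.Gamma (n + m) / (Real.Gamma n * Real.Gamma m)) *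
    ∫ u in (0:ℝ)..p, u ^ (n - 1) * (1 - u) ^ (m - 1)

/-- CDF of the gamma distribution (removed from Mathlib). -/
noncomputable def gammaCDFReal (a r : ℝ) : StieltjesFunction ℝ :=
  cdf (gammaMeasure a r)

lemma isProbabilityMeasureGamma {a r : ℝ} (ha : 0 < a) (hr : 0 < r) :
    IsProbabilityMeasure (gammaMeasure a r) := isProbabilityMeasure_gammaMeasure ha hr

lemma gammaCDFReal_eq_lintegral {a r : ℝ} (ha : 0 < a) (hr : 0 < r) (x : ℝ) :
    gammaCDFReal a r x = ENNReal.toReal (∫⁻ x in Set.Iic x, gammaPDF a r x) :=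
  cdf_gammaMeasure_eq_lintegral ha hr x

open Real Set intervalIntegral in
private lemma aux_subst {n m : ℕ} (hn : 0 < n) (hm : 0 < m) {s t : ℝ} (hs : 0 < s) (ht : 0 < t) :
    ∫ u in (0:ℝ)..1, u ^ (n-1) * ((s*u+t) ^ (n+m))⁻¹ =
      (s^n * t^m)⁻¹ * ∫ v in (0:ℝ)..(s/(s+t)), v ^ (n-1) * (1-v) ^ (m-1) := by
  obtain ⟨a, rfl⟩ : ∃ a, n = a + 1 := ⟨n - 1, (Nat.succ_pred_eq_of_pos hn).symm⟩
  obtain ⟨b, rfl⟩ : ∃ b, m = b + 1 := ⟨m - 1, (Nat.succ_pred_eq_of_pos hm).symm⟩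
  set p : ℝ := s / (s + t) with hp
  have hst : 0 < s + t := by linarith
  have hp0 : 0 ≤ p := by positivity
  have hp1 : p < 1 := by
    rw [hp, div_lt_one hst]; linarith
  have huIcc : uIcc (0:ℝ) p = Icc 0 p := uIcc_of_le hp0
  set φ : ℝ → ℝ := fun v => t * v / (s * (1 - v)) with hφ
  set φ' : ℝ → ℝ := fun v => t / (s * (1 - v) ^ 2) with hφ'
  have hne : ∀ v ∈ Icc (0:ℝ) p, 1 - v ≠ 0 := fun v hv => by
    have := hv.2; nlinarith [hp1]
  have hderiv : ∀ v ∈ uIcc (0:ℝ) p, HasDerivAt φ (φ' v) v := by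
    intro v hv
    rw [huIcc] at hv
    have h1 : 1 - v ≠ 0 := hne v hv
    have h2 : s * (1 - v) ≠ 0 := mul_ne_zero hs.ne' h1
    have := (((hasDerivAt_id v).const_mul t).div
      (((hasDerivAt_id v).const_sub 1).const_mul s) h2)
    refine this.congr_deriv ?_
    have h1' : 0 < 1 - v := by
      rcases lt_or_eq_of_le hv.2 with h | h
      · have : p < 1 := hp1
        linarith
      · subst h; linarith
    rw [hφ']
    simp only [id_eq]
    rw [div_eq_div_iff (by positivity) (by positivity)]
    ring
  have hcont : ContinuousOn φ' (uIcc (0:ℝ) p) := by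
    rw [huIcc]
    apply ContinuousOn.div continuousOn_const
    · fun_prop
    · intro v hv
      exact mul_ne_zero hs.ne' (pow_ne_zero _ (hne v hv))
  have himg : φ '' (uIcc (0:ℝ) p) ⊆ Ici 0 := by
    rw [huIcc]
    rintro - ⟨v, hv, rfl⟩
    have h1 : 0 < 1 - v := by have := hv.2; nlinarith [hp1]
    have h0 : 0 ≤ v := hv.1
    simp only [mem_Ici, hφ]
    positivity
  have hg : ContinuousOn (fun u : ℝ => u ^ (a+1-1) * ((s*u+t) ^ (a+1+(b+1)))⁻¹)
      (φ '' (uIcc (0:ℝ) p)) := by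
    apply ContinuousOn.mono _ himg
    apply ContinuousOn.mul (by fun_prop)
    apply ContinuousOn.inv₀ (by fun_prop)
    intro u hu
    have : (0:ℝ) ≤ u := hu
    positivity
  have key := intervalIntegral.integral_comp_smul_deriv' hderiv hcont hg
  have hφ0 : φ 0 = 0 := by simp [hφ]
  have hφp : φ p = 1 := by
    rw [hφ, hp]
    field_simp
    ring_nf
    exact mul_inv_cancel₀ ht.ne'
  rw [hφ0, hφp] at key
  rw [← key]
  rw [show (s^(a+1) * t^(b+1))⁻¹ * ∫ v in (0:ℝ)..p, v ^ (a+1-1) * (1-v) ^ (b+1-1)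
      = ∫ v in (0:ℝ)..p, (s^(a+1) * t^(b+1))⁻¹ * (v ^ (a+1-1) * (1-v) ^ (b+1-1)) from
    (intervalIntegral.integral_const_mul _ _).symm]
  apply intervalIntegral.integral_congr
  intro v hv
  rw [huIcc] at hv
  have h1 : 0 < 1 - v := by have := hv.2; nlinarith [hp1]
  have h0 : 0 ≤ v := hv.1
  simp only [smul_eq_mul, Function.comp_apply, hφ, hφ', Nat.add_sub_cancel]
  have e1 : s * (t*v/(s*(1-v))) + t = t/(1-v) := by
    field_simp
    ring
  have e2 : (t*v/(s*(1-v)))^a = t^a*v^a/(s^a*(1-v)^a) := by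
    rw [div_pow, mul_pow, mul_pow]
  have e3 : (t/(1-v))^(a+1+(b+1)) = t^(a+1+(b+1))/(1-v)^(a+1+(b+1)) := div_pow ..
  rw [e1, e2, e3]
  have hs' := hs.ne'
  have ht' := ht.ne'
  have h1' := h1.ne'
  field_simp
  ring


open Real Set in
private lemma gamma_cdf_formula {a s : ℝ} (ha : 0 < a) (hs : 0 < s) {y : ℝ} (hy : 0 ≤ y) :
    gammaCDFReal a s y = ∫ x in (0:ℝ)..y, s ^ a / Real.Gamma a * x ^ (a-1) * exp (-(s*x)) := by
  rw [gammaCDFReal_eq_lintegral ha hs, lintegral_Iic_eq_lintegral_Iio_add_Icc _ hy,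
    lintegral_gammaPDF_of_nonpos le_rfl, zero_add]
  rw [intervalIntegral.integral_of_le hy, ← integral_Icc_eq_integral_Ioc]
  rw [integral_eq_lintegral_of_nonneg_ae]
  · congr 1
    refine setLIntegral_congr_fun measurableSet_Icc (fun x hx => ?_)
    rw [gammaPDF_of_nonneg hx.1]
  · refine (ae_restrict_iff' measurableSet_Icc).mpr (ae_of_all _ fun x hx => ?_)
    have h0 : (0:ℝ) ≤ x := hx.1
    positivity
  · exact (((measurable_id'.pow_const _).const_mul _).mul
      (measurable_id'.const_mul _).neg.exp).aestronglyMeasurable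


open Real Set in
private lemma key_integral (n m : ℕ) (hn : 0 < n) (hm : 0 < m) {s t : ℝ} (hs : 0 < s)
    (ht : 0 < t) :
    ∫ y : ℝ, gammaPDFReal m t y * gammaCDFReal n s y = regIncBeta n m (s/(s+t)) := by
  obtain ⟨a, rfl⟩ : ∃ a, n = a + 1 := ⟨n - 1, (Nat.succ_pred_eq_of_pos hn).symm⟩
  obtain ⟨b, rfl⟩ : ∃ b, m = b + 1 := ⟨m - 1, (Nat.succ_pred_eq_of_pos hm).symm⟩
  have hn' : (0:ℝ) < ((a+1:ℕ):ℝ) := by positivity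
  have hm' : (0:ℝ) < ((b+1:ℕ):ℝ) := by positivity
  have hΓn : (0:ℝ) < Real.Gamma ((a+1:ℕ):ℝ) := Real.Gamma_pos_of_pos hn'
  have hΓm : (0:ℝ) < Real.Gamma ((b+1:ℕ):ℝ) := Real.Gamma_pos_of_pos hm'
  set C : ℝ := s^(a+1) * t^(b+1) / (Real.Gamma ((a+1:ℕ):ℝ) * Real.Gamma ((b+1:ℕ):ℝ)) with hC
  set Ψ : ℝ → ℝ → ℝ :=
    fun u y => C * (u ^ a * (y ^ (a+b+1) * exp (-((s*u+t)*y)))) with hΨ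
  clear_value C Ψ
  -- cast helper
  have hcast : ∀ (x : ℝ) (k : ℕ), x ^ (((k+1:ℕ):ℝ)-1) = x ^ k := by
    intro x k
    rw [show ((k+1:ℕ):ℝ)-1 = (k:ℝ) by push_cast; ring, Real.rpow_natCast]
  -- Step 1: restrict to Ioi 0
  rw [← setIntegral_eq_integral_of_forall_compl_eq_zero
      (s := Ici (0:ℝ)) (fun y hy => by
        rw [gammaPDFReal, if_neg (by simpa using hy), zero_mul]),
    integral_Ici_eq_integral_Ioi]
  -- Step 2: pointwise rewrite on Ioi 0
  have step2 : ∀ y ∈ Ioi (0:ℝ),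
      gammaPDFReal ((b+1:ℕ):ℝ) t y * gammaCDFReal ((a+1:ℕ):ℝ) s y
        = ∫ u in Ioc (0:ℝ) 1, Ψ u y := by
    intro y hy
    have hy0 : 0 < y := hy
    rw [gamma_cdf_formula hn' hs hy0.le]
    set Fs : ℝ → ℝ :=
      fun x => s ^ ((a+1:ℕ):ℝ) / Real.Gamma ((a+1:ℕ):ℝ) * x ^ (((a+1:ℕ):ℝ)-1) * exp (-(s*x))
      with hFs
    have hsub : ∫ x in (0:ℝ)..y, Fs x = y * ∫ u in (0:ℝ)..1, Fs (y*u) := by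
      have h := intervalIntegral.integral_comp_mul_left (a := (0:ℝ)) (b := 1) (c := y)
        (f := Fs) hy0.ne'
      simp only [mul_zero, mul_one, smul_eq_mul] at h
      rw [h, ← mul_assoc, mul_inv_cancel₀ hy0.ne', one_mul]
    rw [hsub, show gammaPDFReal ((b+1:ℕ):ℝ) t y * (y * ∫ u in (0:ℝ)..1, Fs (y*u))
        = (gammaPDFReal ((b+1:ℕ):ℝ) t y * y) * ∫ u in (0:ℝ)..1, Fs (y*u) by ring,
      ← intervalIntegral.integral_const_mul, intervalIntegral.integral_of_le zero_le_one]
    refine setIntegral_congr_fun measurableSet_Ioc (fun u hu => ?_)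
    have hu0 : 0 < u := hu.1
    rw [gammaPDFReal, if_pos hy0.le, hFs]
    simp only
    rw [hcast, hcast, Real.rpow_natCast, Real.rpow_natCast, mul_pow]
    simp only [hΨ, hC]
    rw [show Real.exp (-((s*u+t)*y)) = exp (-(t*y)) * exp (-(s*(y*u))) by
        rw [← Real.exp_add]; ring_nf]
    push_cast at hΓn hΓm ⊢
    field_simp
    ring
  rw [setIntegral_congr_fun measurableSet_Ioi step2]
  -- Step 3: Fubini
  haveI : Fact (volume (Ioc (0:ℝ) 1) < ⊤) := ⟨by simp⟩
  have hbound : IntegrableOn (fun y : ℝ => |C| * (y^(a+b+1) * exp (-(t*y)))) (Ioi 0) volume := by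
    have h := (integrableOn_rpow_mul_exp_neg_mul_rpow
      (p := 1) (s := ((a+b+1:ℕ):ℝ))
      (lt_of_lt_of_le (by norm_num) (Nat.cast_nonneg _)) one_pos ht).const_mul |C|
    rw [show (fun y : ℝ => |C| * (y^(a+b+1) * exp (-(t*y))))
        = fun x : ℝ => |C| * (x ^ ((a+b+1:ℕ):ℝ) * exp (-t * x ^ (1:ℝ))) from
      funext fun y => by rw [Real.rpow_natCast, Real.rpow_one]; ring_nf]
    exact h
  have hswap : ∫ y in Ioi (0:ℝ), ∫ u in Ioc (0:ℝ) 1, Ψ u y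
      = ∫ u in Ioc (0:ℝ) 1, ∫ y in Ioi (0:ℝ), Ψ u y := by
    apply integral_integral_swap
    apply Integrable.mono' (g := fun z : ℝ × ℝ => |C| * (z.1^(a+b+1) * exp (-(t*z.1))))
    · -- integrable bound
      refine (integrable_prod_iff ?_).mpr ⟨?_, ?_⟩
      · exact (Continuous.aestronglyMeasurable (by fun_prop :
          Continuous fun z : ℝ × ℝ => |C| * (z.1^(a+b+1) * exp (-(t*z.1)))))
      · refine Filter.Eventually.of_forall fun y => ?_
        have he : (fun y1 : ℝ => |C| * ((y, y1).1 ^ (a+b+1) * exp (-(t*(y, y1).1))))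
            = fun _ : ℝ => |C| * (y ^ (a+b+1) * exp (-(t*y))) := rfl
        rw [he]
        exact integrable_const _
      · have he : (fun y : ℝ => ∫ y1 : ℝ,
            ‖|C| * ((y, y1).1 ^ (a+b+1) * exp (-(t*(y, y1).1)))‖
              ∂(volume.restrict (Ioc (0:ℝ) 1)))
            = fun y : ℝ => ‖|C| * (y ^ (a+b+1) * exp (-(t*y)))‖ := by
          funext y
          rw [show (fun y1 : ℝ => ‖|C| * ((y, y1).1 ^ (a+b+1) * exp (-(t*(y, y1).1)))‖)
              = fun _ : ℝ => ‖|C| * (y ^ (a+b+1) * exp (-(t*y)))‖ from rfl]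
          simp [integral_const]
        rw [he]
        exact hbound.norm
    · -- a.e. strongly measurable
      have hcts : Continuous fun z : ℝ × ℝ =>
          C * (z.2 ^ a * (z.1 ^ (a+b+1) * exp (-((s*z.2+t)*z.1)))) := by fun_prop
      have huc : (Function.uncurry fun y u => Ψ u y)
          = fun z : ℝ × ℝ => C * (z.2 ^ a * (z.1 ^ (a+b+1) * exp (-((s*z.2+t)*z.1)))) := by
        rw [hΨ]; rfl
      rw [huc]
      exact hcts.aestronglyMeasurable
    · -- bound
      rw [Measure.prod_restrict]
      filter_upwards [ae_restrict_mem (measurableSet_Ioi.prod measurableSet_Ioc)] with z hz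
      obtain ⟨hz1, hz2⟩ := hz
      have hy0 : (0:ℝ) < z.1 := hz1
      have hu0 : (0:ℝ) < z.2 := hz2.1
      have hu1 : z.2 ≤ 1 := hz2.2
      have h1 : z.2 ^ a ≤ 1 := pow_le_one₀ hu0.le hu1
      have h2 : exp (-((s*z.2+t)*z.1)) ≤ exp (-(t*z.1)) :=
        Real.exp_le_exp.mpr (by nlinarith [mul_pos (mul_pos hs hu0) hy0])
      have hinner : z.2 ^ a * (z.1 ^ (a+b+1) * exp (-((s*z.2+t)*z.1)))
          ≤ z.1 ^ (a+b+1) * exp (-(t*z.1)) := by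
        calc z.2 ^ a * (z.1 ^ (a+b+1) * exp (-((s*z.2+t)*z.1)))
            ≤ 1 * (z.1 ^ (a+b+1) * exp (-(t*z.1))) :=
              mul_le_mul h1 (mul_le_mul_of_nonneg_left h2 (by positivity)) (by positivity)
                one_pos.le
          _ = z.1 ^ (a+b+1) * exp (-(t*z.1)) := one_mul _
      calc ‖Function.uncurry (fun y u => Ψ u y) z‖
          = |C| * (z.2 ^ a * (z.1 ^ (a+b+1) * exp (-((s*z.2+t)*z.1)))) := by
            rw [show Function.uncurry (fun y u => Ψ u y) z
                = C * (z.2 ^ a * (z.1 ^ (a+b+1) * exp (-((s*z.2+t)*z.1)))) by rw [hΨ]; rfl,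
              Real.norm_eq_abs, abs_mul, abs_of_nonneg
              (by positivity : (0:ℝ) ≤ z.2 ^ a * (z.1 ^ (a+b+1) * exp (-((s*z.2+t)*z.1))))]
        _ ≤ |C| * (z.1 ^ (a+b+1) * exp (-(t*z.1))) :=
            mul_le_mul_of_nonneg_left hinner (abs_nonneg _)
  rw [hswap]
  -- Step 4: inner integral in y
  have step4 : ∀ u ∈ Ioc (0:ℝ) 1, ∫ y in Ioi (0:ℝ), Ψ u y
      = (C * Real.Gamma ((a+b+2:ℕ):ℝ)) * (u ^ a * ((s*u+t) ^ (a+b+2))⁻¹) := by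
    intro u hu
    have hr : 0 < s*u+t := by nlinarith [hu.1]
    simp only [hΨ]
    rw [integral_const_mul]
    have hyeq : ∀ y : ℝ, u ^ a * (y ^ (a+b+1) * exp (-((s*u+t)*y)))
        = u ^ a * (y ^ (((a+b+2:ℕ):ℝ)-1) * exp (-((s*u+t)*y))) := by
      intro y
      rw [show ((a+b+2:ℕ):ℝ)-1 = ((a+b+1:ℕ):ℝ) by push_cast; ring, Real.rpow_natCast]
    simp_rw [hyeq]
    rw [integral_const_mul, integral_rpow_mul_exp_neg_mul_Ioi (by positivity) hr]
    rw [Real.rpow_natCast, one_div, inv_pow]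
    ring
  rw [setIntegral_congr_fun measurableSet_Ioc step4]
  -- Step 5: assemble
  rw [integral_const_mul, ← intervalIntegral.integral_of_le zero_le_one]
  have haux := aux_subst (n := a+1) (m := b+1) (Nat.succ_pos a) (Nat.succ_pos b) hs ht
  simp only [Nat.add_sub_cancel, show a+1+(b+1) = a+b+2 from by ring] at haux
  rw [haux, regIncBeta, hC]
  simp only [Nat.add_sub_cancel]
  rw [show ((a+1:ℕ):ℝ) + ((b+1:ℕ):ℝ) = ((a+b+2:ℕ):ℝ) by push_cast; ring]
  push_cast at hΓn hΓm ⊢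
  field_simp

/-- If `X ~ Gamma(n, s)` and `Y ~ Gamma(m, t)` are independent, then
`Pr[X ≤ Y] = I_p(n, m)` with `p = s / (s + t)`. -/
theorem prob_le_eq_regIncBeta
    {Ω : Type*} {mΩ : MeasurableSpace Ω} (P : Measure Ω) [IsProbabilityMeasure P]
    (n m : ℕ) (hn : 0 < n) (hm : 0 < m) (s t : ℝ) (hs : 0 < s) (ht : 0 < t)
    (X Y : Ω → ℝ)
    (hX : Measure.map X P = gammaMeasure n s)
    (hY : Measure.map Y P = gammaMeasure m t)
    (hXY : IndepFun X Y P) :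
    (P {ω | X ω ≤ Y ω}).toReal = regIncBeta n m (s / (s + t)) := by
  have hn' : (0:ℝ) < (n:ℝ) := by exact_mod_cast hn
  have hm' : (0:ℝ) < (m:ℝ) := by exact_mod_cast hm
  haveI hPμ : IsProbabilityMeasure (gammaMeasure n s) := isProbabilityMeasureGamma hn' hs
  haveI hPν : IsProbabilityMeasure (gammaMeasure m t) := isProbabilityMeasureGamma hm' ht
  have hXm : AEMeasurable X P := by
    by_contra h
    have h0 := Measure.map_of_not_aemeasurable h
    rw [hX] at h0
    have h1 := hPμ.measure_univ
    rw [h0] at h1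
    simp at h1
  have hYm : AEMeasurable Y P := by
    by_contra h
    have h0 := Measure.map_of_not_aemeasurable h
    rw [hY] at h0
    have h1 := hPν.measure_univ
    rw [h0] at h1
    simp at h1
  have hS : MeasurableSet {p : ℝ × ℝ | p.1 ≤ p.2} :=
    measurableSet_le measurable_fst measurable_snd
  have hmap : Measure.map (fun ω => (X ω, Y ω)) P
      = (gammaMeasure n s).prod (gammaMeasure m t) := by
    rw [← hX, ← hY]
    exact (ProbabilityTheory.indepFun_iff_map_prod_eq_prod_map_map hXm hYm).mp hXY
  have hset : P {ω | X ω ≤ Y ω}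
      = ((gammaMeasure n s).prod (gammaMeasure m t)) {p : ℝ × ℝ | p.1 ≤ p.2} := by
    rw [← hmap, Measure.map_apply_of_aemeasurable (hXm.prodMk hYm) hS]
    rfl
  have hGmeas : Measurable fun y : ℝ => (gammaMeasure n s) (Set.Iic y) :=
    Monotone.measurable fun y z hyz => measure_mono (Set.Iic_subset_Iic.mpr hyz)
  have hprod : ((gammaMeasure n s).prod (gammaMeasure m t)) {p : ℝ × ℝ | p.1 ≤ p.2}
      = ∫⁻ y, gammaPDF m t y * (gammaMeasure n s) (Set.Iic y) := by
    rw [Measure.prod_apply_symm hS]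
    have h1 : ∀ y : ℝ, (fun x => (x, y)) ⁻¹' {p : ℝ × ℝ | p.1 ≤ p.2} = Set.Iic y :=
      fun y => rfl
    simp_rw [h1]
    have hpdfMeas : Measurable (gammaPDF (m:ℝ) t) :=
      (measurable_gammaPDFReal m t).ennreal_ofReal
    rw [show gammaMeasure (m:ℝ) t = volume.withDensity (gammaPDF m t) from rfl,
      lintegral_withDensity_eq_lintegral_mul volume hpdfMeas hGmeas]
    rfl
  have hcdf : ∀ y : ℝ, (gammaMeasure n s) (Set.Iic y)
      = ENNReal.ofReal (gammaCDFReal n s y) := by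
    intro y
    rw [gammaCDFReal, cdf_eq_real, measureReal_def, ENNReal.ofReal_toReal (measure_ne_top _ _)]
  have hcdf0 : ∀ y : ℝ, 0 ≤ gammaCDFReal (n:ℝ) s y :=
    fun y => cdf_nonneg (μ := gammaMeasure (n:ℝ) s) y
  have hcdf1 : ∀ y : ℝ, gammaCDFReal (n:ℝ) s y ≤ 1 :=
    fun y => cdf_le_one (μ := gammaMeasure (n:ℝ) s) y
  have hpdfInt : Integrable (gammaPDFReal m t) volume := by
    refine ⟨(measurable_gammaPDFReal _ _).aestronglyMeasurable, ?_⟩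
    rw [hasFiniteIntegral_iff_ofReal (ae_of_all _ (gammaPDFReal_nonneg hm' ht))]
    have h1 : ∫⁻ y, ENNReal.ofReal (gammaPDFReal (m:ℝ) t y) = 1 :=
      lintegral_gammaPDF_eq_one hm' ht
    rw [h1]
    exact ENNReal.one_lt_top
  have hint : Integrable (fun y => gammaPDFReal m t y * gammaCDFReal n s y) volume := by
    refine hpdfInt.mono
      ((measurable_gammaPDFReal m t).aestronglyMeasurable.mul
        (gammaCDFReal (n:ℝ) s).mono.measurable.aestronglyMeasurable)
      (ae_of_all _ fun y => ?_)
    simp only [Real.norm_eq_abs, abs_mul]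
    rw [abs_of_nonneg (gammaPDFReal_nonneg hm' ht y), abs_of_nonneg (hcdf0 y)]
    calc gammaPDFReal m t y * gammaCDFReal n s y
        ≤ gammaPDFReal m t y * 1 :=
          mul_le_mul_of_nonneg_left (hcdf1 y) (gammaPDFReal_nonneg hm' ht y)
      _ = gammaPDFReal m t y := mul_one _
  have hnn : 0 ≤ᵐ[volume] fun y => gammaPDFReal m t y * gammaCDFReal n s y :=
    ae_of_all _ fun y => mul_nonneg (gammaPDFReal_nonneg hm' ht y) (hcdf0 y)
  have hlin : (∫⁻ y, gammaPDF m t y * (gammaMeasure n s) (Set.Iic y))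
      = ENNReal.ofReal (∫ y, gammaPDFReal m t y * gammaCDFReal n s y) := by
    rw [ofReal_integral_eq_lintegral_ofReal hint hnn]
    refine lintegral_congr fun y => ?_
    rw [hcdf y, show gammaPDF (m:ℝ) t y = ENNReal.ofReal (gammaPDFReal (m:ℝ) t y) from rfl,
      ← ENNReal.ofReal_mul (gammaPDFReal_nonneg hm' ht y)]
  rw [hset, hprod, hlin, ENNReal.toReal_ofReal (integral_nonneg fun y =>
    mul_nonneg (gammaPDFReal_nonneg hm' ht y) (hcdf0 y))]
  exact key_integral n m hn hm hs ht
end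

section
/- Let n and m be positive integers and s, t > 0. Then ∫_0^∞ (γ(n, s y)/Γ(n)) · (t^m/Γ(m)) · y^{m−1} e^{−t y} dy = I_p(n, m), where p = s/(s+t). In words: integrating the Gamma(n, s) cumulative distribution function evaluated at y against the Gamma(m, t) density yields the regularized incomplete beta function at p. -/
open MeasureTheory

/-- The lower incomplete gamma function `γ(n, x) = ∫_0^x u^{n-1} e^{-u} du` for a
positive integer parameter `n`. -/
noncomputable def lowerIncGamma (n : ℕ) (x : ℝ) : ℝ :=
  ∫ u in (0:ℝ)..x, u ^ (n - 1) * Real.exp (-u)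

-- moment integrals
lemma integrableOn_pow_mul_exp (k : ℕ) {c : ℝ} (hc : 0 < c) :
    IntegrableOn (fun y : ℝ => y ^ k * Real.exp (-(c * y))) (Set.Ioi 0) := by
  have h := integrableOn_rpow_mul_exp_neg_mul_rpow (p := 1) (s := (k : ℝ)) (b := c)
    (by linarith [Nat.cast_nonneg (α := ℝ) k]) one_pos hc
  refine h.congr_fun (fun x hx => ?_) measurableSet_Ioi
  beta_reduce
  rw [Real.rpow_natCast, Real.rpow_one, neg_mul]

lemma integral_pow_mul_exp (k : ℕ) {c : ℝ} (hc : 0 < c) :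
    ∫ y in Set.Ioi (0:ℝ), y ^ k * Real.exp (-(c * y)) = k.factorial / c ^ (k + 1) := by
  have h := Real.integral_rpow_mul_exp_neg_mul_Ioi (a := (k : ℝ) + 1) (by positivity) hc
  rw [show ((k : ℝ) + 1) - 1 = (k : ℝ) by ring] at h
  simp_rw [Real.rpow_natCast] at h
  rw [h, show ((k : ℝ) + 1) = ((k + 1 : ℕ) : ℝ) by push_cast; ring, Real.rpow_natCast,
    show ((k + 1 : ℕ) : ℝ) = (k : ℝ) + 1 by push_cast; ring, Real.Gamma_nat_eq_factorial,
    div_pow, one_pow]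
  field_simp

lemma lowerIncGamma_one (x : ℝ) : lowerIncGamma 1 x = 1 - Real.exp (-x) := by
  have key : ∀ u ∈ Set.uIcc (0:ℝ) x, HasDerivAt (fun u : ℝ => -Real.exp (-u))
      (u ^ (1 - 1) * Real.exp (-u)) u := by
    intro u _
    have h : HasDerivAt (fun u : ℝ => Real.exp (-u)) (-Real.exp (-u)) u := by
      simpa using (hasDerivAt_neg u).exp
    refine HasDerivAt.congr_deriv h.neg ?_
    simp
  have h := intervalIntegral.integral_eq_sub_of_hasDerivAt key
    (Continuous.intervalIntegrable (by continuity) _ _)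
  rw [lowerIncGamma, h]
  simp only [neg_zero, Real.exp_zero]
  ring

lemma lowerIncGamma_succ (N : ℕ) (x : ℝ) :
    lowerIncGamma (N + 1 + 1) x
      = ((N : ℝ) + 1) * lowerIncGamma (N + 1) x - x ^ (N + 1) * Real.exp (-x) := by
  have key : ∀ u ∈ Set.uIcc (0:ℝ) x, HasDerivAt (fun u : ℝ => -(u ^ (N + 1) * Real.exp (-u)))
      (u ^ (N + 1) * Real.exp (-u) - ((N : ℝ) + 1) * (u ^ N * Real.exp (-u))) u := by
    intro u _
    have he : HasDerivAt (fun u : ℝ => Real.exp (-u)) (-Real.exp (-u)) u := by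
      simpa using (hasDerivAt_neg u).exp
    have h := ((hasDerivAt_pow (N + 1) u).mul he).neg
    refine HasDerivAt.congr_deriv h ?_
    simp only [Nat.add_sub_cancel]
    push_cast
    ring
  have h := intervalIntegral.integral_eq_sub_of_hasDerivAt key
    (Continuous.intervalIntegrable (by continuity) _ _)
  rw [intervalIntegral.integral_sub (Continuous.intervalIntegrable (by continuity) _ _)
    (Continuous.intervalIntegrable (by continuity) _ _),
    intervalIntegral.integral_const_mul] at h
  have e1 : lowerIncGamma (N + 1 + 1) x = ∫ u in (0:ℝ)..x, u ^ (N + 1) * Real.exp (-u) := by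
    simp only [lowerIncGamma, Nat.add_sub_cancel]
  have e2 : lowerIncGamma (N + 1) x = ∫ u in (0:ℝ)..x, u ^ N * Real.exp (-u) := by
    simp only [lowerIncGamma, Nat.add_sub_cancel]
  rw [e1, e2]
  simp only [zero_pow (Nat.succ_ne_zero N), neg_zero, Real.exp_zero, mul_one, zero_mul, neg_zero,
    sub_zero] at h
  linarith

lemma continuous_lowerIncGamma (n : ℕ) : Continuous (lowerIncGamma n) :=
  intervalIntegral.continuous_primitive
    (fun a b => Continuous.intervalIntegrable (by continuity) a b) 0

lemma lowerIncGamma_nonneg (n : ℕ) {x : ℝ} (hx : 0 ≤ x) : 0 ≤ lowerIncGamma n x :=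
  intervalIntegral.integral_nonneg hx fun u hu =>
    mul_nonneg (pow_nonneg hu.1 _) (Real.exp_pos _).le

lemma lowerIncGamma_le (n : ℕ) (hn : 0 < n) {x : ℝ} (hx : 0 ≤ x) :
    lowerIncGamma n x ≤ Real.Gamma n := by
  have hint : IntegrableOn (fun u : ℝ => u ^ (n - 1) * Real.exp (-u)) (Set.Ioi 0) := by
    have h := integrableOn_pow_mul_exp (n - 1) (c := 1) one_pos
    simpa using h
  have hG : Real.Gamma n = ∫ u in Set.Ioi (0:ℝ), u ^ (n - 1) * Real.exp (-u) := by
    rw [Real.Gamma_eq_integral (by exact_mod_cast hn)]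
    refine setIntegral_congr_fun measurableSet_Ioi fun u hu => ?_
    rw [show ((n : ℝ) - 1) = ((n - 1 : ℕ) : ℝ) by rw [Nat.cast_sub hn, Nat.cast_one],
      Real.rpow_natCast]
    ring
  rw [lowerIncGamma, intervalIntegral.integral_of_le hx, hG]
  refine setIntegral_mono_set hint ?_ (HasSubset.Subset.eventuallyLE Set.Ioc_subset_Ioi_self)
  filter_upwards [self_mem_ae_restrict measurableSet_Ioi] with u hu
  have : (0:ℝ) < u := hu
  positivity

lemma integral_one_sub_pow (M : ℕ) (p : ℝ) :
    ((M : ℝ) + 1) * ∫ u in (0:ℝ)..p, (1 - u) ^ M = 1 - (1 - p) ^ (M + 1) := by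
  have key : ∀ u ∈ Set.uIcc (0:ℝ) p, HasDerivAt (fun u : ℝ => -(1 - u) ^ (M + 1))
      (((M : ℝ) + 1) * (1 - u) ^ M) u := by
    intro u _
    have h1 : HasDerivAt (fun u : ℝ => 1 - u) (-1) u := (hasDerivAt_id u).const_sub 1
    have h := ((hasDerivAt_pow (M + 1) (1 - u)).comp u h1).neg
    refine HasDerivAt.congr_deriv h ?_
    simp only [Nat.add_sub_cancel]
    push_cast
    ring
  have h := intervalIntegral.integral_eq_sub_of_hasDerivAt key
    (Continuous.intervalIntegrable (by continuity) _ _)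
  rw [intervalIntegral.integral_const_mul] at h
  rw [h]
  simp
  ring

lemma beta_step (N M : ℕ) (p : ℝ) :
    ((N : ℝ) + 1) * (∫ u in (0:ℝ)..p, u ^ N * (1 - u) ^ M)
      - ((N : ℝ) + (M : ℝ) + 2) * (∫ u in (0:ℝ)..p, u ^ (N + 1) * (1 - u) ^ M)
      = p ^ (N + 1) * (1 - p) ^ (M + 1) := by
  have key : ∀ u ∈ Set.uIcc (0:ℝ) p, HasDerivAt (fun u : ℝ => u ^ (N + 1) * (1 - u) ^ (M + 1))
      (((N : ℝ) + 1) * (u ^ N * (1 - u) ^ M)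
        - ((N : ℝ) + (M : ℝ) + 2) * (u ^ (N + 1) * (1 - u) ^ M)) u := by
    intro u _
    have h1 : HasDerivAt (fun u : ℝ => 1 - u) (-1) u := (hasDerivAt_id u).const_sub 1
    have h2 := (hasDerivAt_pow (M + 1) (1 - u)).comp u h1
    have h := (hasDerivAt_pow (N + 1) u).mul h2
    refine HasDerivAt.congr_deriv h ?_
    simp only [Function.comp_apply, Nat.add_sub_cancel]
    push_cast
    ring
  have h := intervalIntegral.integral_eq_sub_of_hasDerivAt key
    (Continuous.intervalIntegrable (by continuity) _ _)
  rw [intervalIntegral.integral_sub (Continuous.intervalIntegrable (by continuity) _ _)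
    (Continuous.intervalIntegrable (by continuity) _ _),
    intervalIntegral.integral_const_mul, intervalIntegral.integral_const_mul] at h
  simp only [zero_pow (Nat.succ_ne_zero N), zero_mul, sub_zero] at h
  linarith

lemma regIncBeta_one (M : ℕ) (p : ℝ) :
    regIncBeta 1 (M + 1) p = 1 - (1 - p) ^ (M + 1) := by
  have e1 : Real.Gamma (((1:ℕ) : ℝ) + ((M + 1 : ℕ) : ℝ)) = ((M + 1).factorial : ℝ) := by
    rw [show ((1:ℕ) : ℝ) + ((M + 1 : ℕ) : ℝ) = ((M + 1 : ℕ) : ℝ) + 1 by push_cast; ring]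
    exact_mod_cast Real.Gamma_nat_eq_factorial (M + 1)
  have e2 : Real.Gamma (((1:ℕ) : ℝ)) = 1 := by
    rw [Nat.cast_one, Real.Gamma_one]
  have e3 : Real.Gamma (((M + 1 : ℕ) : ℝ)) = (M.factorial : ℝ) := by
    rw [show ((M + 1 : ℕ) : ℝ) = ((M : ℕ) : ℝ) + 1 by push_cast; ring]
    exact_mod_cast Real.Gamma_nat_eq_factorial M
  have hJ := integral_one_sub_pow M p
  rw [regIncBeta, e1, e2, e3]
  simp only [Nat.sub_self, pow_zero, one_mul, Nat.add_sub_cancel]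
  rw [← hJ, Nat.factorial_succ]
  have hM : (M.factorial : ℝ) ≠ 0 := Nat.cast_ne_zero.mpr (Nat.factorial_ne_zero M)
  push_cast
  field_simp

lemma regIncBeta_succ (N M : ℕ) (p : ℝ) :
    regIncBeta (N + 1 + 1) (M + 1) p = regIncBeta (N + 1) (M + 1) p
      - ((N + 1 + M).factorial : ℝ) / (((N + 1).factorial : ℝ) * (M.factorial : ℝ))
        * (p ^ (N + 1) * (1 - p) ^ (M + 1)) := by
  have e1 : Real.Gamma (((N + 1 + 1 : ℕ) : ℝ) + ((M + 1 : ℕ) : ℝ))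
      = ((N + 1 + M + 1).factorial : ℝ) := by
    rw [show ((N + 1 + 1 : ℕ) : ℝ) + ((M + 1 : ℕ) : ℝ) = ((N + 1 + M + 1 : ℕ) : ℝ) + 1 by
      push_cast; ring]
    exact_mod_cast Real.Gamma_nat_eq_factorial _
  have e2 : Real.Gamma (((N + 1 + 1 : ℕ) : ℝ)) = (((N + 1).factorial : ℕ) : ℝ) := by
    rw [show ((N + 1 + 1 : ℕ) : ℝ) = ((N + 1 : ℕ) : ℝ) + 1 by push_cast; ring]
    exact_mod_cast Real.Gamma_nat_eq_factorial _
  have e3 : Real.Gamma (((N + 1 : ℕ) : ℝ) + ((M + 1 : ℕ) : ℝ)) = ((N + 1 + M).factorial : ℝ) := by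
    rw [show ((N + 1 : ℕ) : ℝ) + ((M + 1 : ℕ) : ℝ) = ((N + 1 + M : ℕ) : ℝ) + 1 by push_cast; ring]
    exact_mod_cast Real.Gamma_nat_eq_factorial _
  have e4 : Real.Gamma (((N + 1 : ℕ) : ℝ)) = ((N.factorial : ℕ) : ℝ) := by
    exact_mod_cast Real.Gamma_nat_eq_factorial _
  have e5 : Real.Gamma (((M + 1 : ℕ) : ℝ)) = ((M.factorial : ℕ) : ℝ) := by
    exact_mod_cast Real.Gamma_nat_eq_factorial _
  have hstep := beta_step N M p
  rw [regIncBeta, regIncBeta, e1, e2, e3, e4, e5]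
  simp only [Nat.add_sub_cancel]
  rw [← hstep]
  have hM : (M.factorial : ℝ) ≠ 0 := Nat.cast_ne_zero.mpr (Nat.factorial_ne_zero M)
  have hN : (N.factorial : ℝ) ≠ 0 := Nat.cast_ne_zero.mpr (Nat.factorial_ne_zero N)
  rw [show (N + 1 + M + 1).factorial = (N + 1 + M + 1) * (N + 1 + M).factorial from
      Nat.factorial_succ _,
    show (N + 1).factorial = (N + 1) * N.factorial from Nat.factorial_succ _]
  have hNM : ((N + 1 + M).factorial : ℝ) ≠ 0 := Nat.cast_ne_zero.mpr (Nat.factorial_ne_zero _)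
  push_cast
  field_simp
  ring

lemma integrable_cdf_mul (n m : ℕ) (hn : 0 < n) (hm : 0 < m) {s t : ℝ} (hs : 0 < s) (ht : 0 < t) :
    IntegrableOn (fun y : ℝ => lowerIncGamma n (s * y) / Real.Gamma n *
      (t ^ m / Real.Gamma m * y ^ (m - 1) * Real.exp (-(t * y)))) (Set.Ioi 0) := by
  have hGn : 0 < Real.Gamma (n : ℝ) := Real.Gamma_pos_of_pos (by exact_mod_cast hn)
  have hGm : 0 < Real.Gamma (m : ℝ) := Real.Gamma_pos_of_pos (by exact_mod_cast hm)
  have hD : IntegrableOn (fun y : ℝ => t ^ m / Real.Gamma m * y ^ (m - 1) * Real.exp (-(t * y)))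
      (Set.Ioi 0) :=
    IntegrableOn.congr_fun
      (Integrable.const_mul (integrableOn_pow_mul_exp (m - 1) ht) (t ^ m / Real.Gamma m))
      (fun x _ => by ring) measurableSet_Ioi
  refine Integrable.mono' hD ?_ ?_
  · have hc : Continuous fun y : ℝ => lowerIncGamma n (s * y) :=
      (continuous_lowerIncGamma n).comp (continuous_const.mul continuous_id)
    exact ((hc.div_const _).mul (by continuity)).aestronglyMeasurable
  · filter_upwards [self_mem_ae_restrict measurableSet_Ioi] with y hy
    have hy0 : (0:ℝ) < y := hy
    have h0 : 0 ≤ s * y := by positivity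
    have h1 : 0 ≤ lowerIncGamma n (s * y) := lowerIncGamma_nonneg n h0
    have h2 : lowerIncGamma n (s * y) ≤ Real.Gamma n := lowerIncGamma_le n hn h0
    have hD0 : 0 ≤ t ^ m / Real.Gamma m * y ^ (m - 1) * Real.exp (-(t * y)) := by positivity
    have ha1 : lowerIncGamma n (s * y) / Real.Gamma n ≤ 1 := (div_le_one hGn).2 h2
    have ha0 : 0 ≤ lowerIncGamma n (s * y) / Real.Gamma n := div_nonneg h1 hGn.le
    rw [Real.norm_eq_abs, abs_of_nonneg (mul_nonneg ha0 hD0)]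
    calc lowerIncGamma n (s * y) / Real.Gamma n *
          (t ^ m / Real.Gamma m * y ^ (m - 1) * Real.exp (-(t * y)))
        ≤ 1 * (t ^ m / Real.Gamma m * y ^ (m - 1) * Real.exp (-(t * y))) :=
          mul_le_mul_of_nonneg_right ha1 hD0
      _ = _ := one_mul _

lemma main_aux (M : ℕ) {s t : ℝ} (hs : 0 < s) (ht : 0 < t) :
    ∀ n : ℕ, 0 < n →
      (∫ y in Set.Ioi (0:ℝ), lowerIncGamma n (s * y) / Real.Gamma n *
        (t ^ (M + 1) / Real.Gamma ((M + 1 : ℕ)) * y ^ (M + 1 - 1) * Real.exp (-(t * y))))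
        = regIncBeta n (M + 1) (s / (s + t)) := by
  have hst : 0 < s + t := by linarith
  have hst' : s + t ≠ 0 := ne_of_gt hst
  have hGM : Real.Gamma ((M + 1 : ℕ) : ℝ) = (M.factorial : ℝ) := by
    exact_mod_cast Real.Gamma_nat_eq_factorial M
  have hfM : (M.factorial : ℝ) ≠ 0 := Nat.cast_ne_zero.mpr (Nat.factorial_ne_zero M)
  have hDint : IntegrableOn
      (fun y : ℝ => t ^ (M + 1) / Real.Gamma ((M + 1 : ℕ) : ℝ) * y ^ M * Real.exp (-(t * y)))
      (Set.Ioi 0) :=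
    IntegrableOn.congr_fun ((integrableOn_pow_mul_exp M ht).const_mul
        (t ^ (M + 1) / Real.Gamma ((M + 1 : ℕ) : ℝ)))
      (fun x _ => by ring) measurableSet_Ioi
  have hDval : ∫ y in Set.Ioi (0:ℝ),
      t ^ (M + 1) / Real.Gamma ((M + 1 : ℕ) : ℝ) * y ^ M * Real.exp (-(t * y)) = 1 := by
    rw [setIntegral_congr_fun measurableSet_Ioi
        (g := fun y : ℝ => t ^ (M + 1) / Real.Gamma ((M + 1 : ℕ) : ℝ) *
          (y ^ M * Real.exp (-(t * y)))) (fun x _ => by ring),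
      integral_const_mul, integral_pow_mul_exp M ht, hGM]
    field_simp
  simp only [Nat.add_sub_cancel]
  intro n
  induction n with
  | zero => intro h; exact absurd h (lt_irrefl 0)
  | succ n ih =>
    intro _
    rcases Nat.eq_zero_or_pos n with rfl | hn
    · -- base case n = 1
      simp only [Nat.zero_add]
      have hpt : ∀ y : ℝ, lowerIncGamma 1 (s * y) / Real.Gamma ((1 : ℕ) : ℝ) *
          (t ^ (M + 1) / Real.Gamma ((M + 1 : ℕ) : ℝ) * y ^ M * Real.exp (-(t * y)))
          = (t ^ (M + 1) / Real.Gamma ((M + 1 : ℕ) : ℝ) * y ^ M * Real.exp (-(t * y)))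
            - Real.exp (-(s * y)) *
              (t ^ (M + 1) / Real.Gamma ((M + 1 : ℕ) : ℝ) * y ^ M * Real.exp (-(t * y))) := by
        intro y
        rw [show ((1 : ℕ) : ℝ) = 1 by norm_num, Real.Gamma_one, lowerIncGamma_one]
        ring
      simp only [hpt]
      have hexpint : IntegrableOn (fun y : ℝ => Real.exp (-(s * y)) *
          (t ^ (M + 1) / Real.Gamma ((M + 1 : ℕ) : ℝ) * y ^ M * Real.exp (-(t * y))))
          (Set.Ioi 0) :=
        IntegrableOn.congr_fun ((integrableOn_pow_mul_exp M hst).const_mul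
            (t ^ (M + 1) / Real.Gamma ((M + 1 : ℕ) : ℝ)))
          (fun y _ => by
            beta_reduce
            rw [show -((s + t) * y) = -(s * y) + -(t * y) by ring, Real.exp_add]; ring)
          measurableSet_Ioi
      rw [integral_sub hDint hexpint, hDval]
      have hexpval : ∫ y in Set.Ioi (0:ℝ), Real.exp (-(s * y)) *
          (t ^ (M + 1) / Real.Gamma ((M + 1 : ℕ) : ℝ) * y ^ M * Real.exp (-(t * y)))
          = t ^ (M + 1) / (s + t) ^ (M + 1) := by
        rw [setIntegral_congr_fun measurableSet_Ioi
            (g := fun y : ℝ => t ^ (M + 1) / Real.Gamma ((M + 1 : ℕ) : ℝ) *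
              (y ^ M * Real.exp (-((s + t) * y))))
            (fun y _ => by
              beta_reduce
              rw [show -((s + t) * y) = -(s * y) + -(t * y) by ring, Real.exp_add]; ring),
          integral_const_mul, integral_pow_mul_exp M hst, hGM]
        field_simp
      rw [hexpval, regIncBeta_one, show (1:ℝ) - s / (s + t) = t / (s + t) by field_simp; ring, div_pow]
    · -- inductive step
      obtain ⟨N, rfl⟩ : ∃ N, n = N + 1 := ⟨n - 1, (Nat.succ_pred_eq_of_pos hn).symm⟩
      have hGn1 : 0 < Real.Gamma ((N + 1 : ℕ) : ℝ) := Real.Gamma_pos_of_pos (by positivity)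
      have hGN : Real.Gamma ((N + 1 : ℕ) : ℝ) = (N.factorial : ℝ) := by
        exact_mod_cast Real.Gamma_nat_eq_factorial N
      have hN1 : ((N : ℝ) + 1) ≠ 0 := by positivity
      have hGsucc : Real.Gamma ((N + 1 + 1 : ℕ) : ℝ)
          = ((N : ℝ) + 1) * Real.Gamma ((N + 1 : ℕ) : ℝ) := by
        rw [show ((N + 1 + 1 : ℕ) : ℝ) = ((N + 1 : ℕ) : ℝ) + 1 by push_cast; ring,
          Real.Gamma_add_one (by positivity)]
        push_cast
        ring
      have hpt : ∀ y : ℝ, lowerIncGamma (N + 1 + 1) (s * y) / Real.Gamma ((N + 1 + 1 : ℕ) : ℝ) *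
          (t ^ (M + 1) / Real.Gamma ((M + 1 : ℕ) : ℝ) * y ^ M * Real.exp (-(t * y)))
          = lowerIncGamma (N + 1) (s * y) / Real.Gamma ((N + 1 : ℕ) : ℝ) *
              (t ^ (M + 1) / Real.Gamma ((M + 1 : ℕ) : ℝ) * y ^ M * Real.exp (-(t * y)))
            - (s * y) ^ (N + 1) * Real.exp (-(s * y)) /
                (((N : ℝ) + 1) * Real.Gamma ((N + 1 : ℕ) : ℝ)) *
              (t ^ (M + 1) / Real.Gamma ((M + 1 : ℕ) : ℝ) * y ^ M * Real.exp (-(t * y))) := by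
        intro y
        rw [lowerIncGamma_succ, hGsucc]
        field_simp
      simp only [hpt]
      have h1int := integrable_cdf_mul (N + 1) (M + 1) (Nat.succ_pos N) (Nat.succ_pos M) hs ht
      simp only [Nat.add_sub_cancel] at h1int
      have h2int : IntegrableOn (fun y : ℝ => (s * y) ^ (N + 1) * Real.exp (-(s * y)) /
          (((N : ℝ) + 1) * Real.Gamma ((N + 1 : ℕ) : ℝ)) *
          (t ^ (M + 1) / Real.Gamma ((M + 1 : ℕ) : ℝ) * y ^ M * Real.exp (-(t * y))))
          (Set.Ioi 0) :=
        IntegrableOn.congr_fun ((integrableOn_pow_mul_exp (N + 1 + M) hst).const_mul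
            (s ^ (N + 1) / (((N : ℝ) + 1) * Real.Gamma ((N + 1 : ℕ) : ℝ)) *
              (t ^ (M + 1) / Real.Gamma ((M + 1 : ℕ) : ℝ))))
          (fun y _ => by
            beta_reduce
            rw [show -((s + t) * y) = -(s * y) + -(t * y) by ring, Real.exp_add, mul_pow,
              pow_add]; ring)
          measurableSet_Ioi
      rw [integral_sub h1int h2int, ih hn]
      have h2val : ∫ y in Set.Ioi (0:ℝ), (s * y) ^ (N + 1) * Real.exp (-(s * y)) /
          (((N : ℝ) + 1) * Real.Gamma ((N + 1 : ℕ) : ℝ)) *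
          (t ^ (M + 1) / Real.Gamma ((M + 1 : ℕ) : ℝ) * y ^ M * Real.exp (-(t * y)))
          = s ^ (N + 1) / (((N : ℝ) + 1) * Real.Gamma ((N + 1 : ℕ) : ℝ)) *
              (t ^ (M + 1) / Real.Gamma ((M + 1 : ℕ) : ℝ)) *
              (((N + 1 + M).factorial : ℝ) / (s + t) ^ (N + 1 + M + 1)) := by
        rw [setIntegral_congr_fun measurableSet_Ioi
            (g := fun y : ℝ => s ^ (N + 1) / (((N : ℝ) + 1) * Real.Gamma ((N + 1 : ℕ) : ℝ)) *
              (t ^ (M + 1) / Real.Gamma ((M + 1 : ℕ) : ℝ)) *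
              (y ^ (N + 1 + M) * Real.exp (-((s + t) * y))))
            (fun y _ => by
              beta_reduce
              rw [show -((s + t) * y) = -(s * y) + -(t * y) by ring, Real.exp_add, mul_pow,
                pow_add]; ring),
          integral_const_mul, integral_pow_mul_exp (N + 1 + M) hst]
      rw [h2val, regIncBeta_succ]
      congr 1
      rw [show (1:ℝ) - s / (s + t) = t / (s + t) by field_simp; ring, hGN, hGM, div_pow, div_pow,
        show (N + 1).factorial = (N + 1) * N.factorial from Nat.factorial_succ N]
      have hfN : (N.factorial : ℝ) ≠ 0 := Nat.cast_ne_zero.mpr (Nat.factorial_ne_zero N)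
      push_cast
      field_simp
      ring

/-- Integrating the `Gamma(n, s)` c.d.f. `γ(n, s y)/Γ(n)` against the
`Gamma(m, t)` density gives the regularized incomplete beta function at
`p = s/(s+t)`. -/
theorem integral_lowerIncGamma_mul_gammaDensity
    (n m : ℕ) (hn : 0 < n) (hm : 0 < m) (s t : ℝ) (hs : 0 < s) (ht : 0 < t) :
    ∫ y in Set.Ioi (0:ℝ),
        (lowerIncGamma n (s * y) / Real.Gamma n) *
          (t ^ m / Real.Gamma m * y ^ (m - 1) * Real.exp (-(t * y))) =
      regIncBeta n m (s / (s + t)) := by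
  obtain ⟨M, rfl⟩ : ∃ M, m = M + 1 := ⟨m - 1, (Nat.succ_pred_eq_of_pos hm).symm⟩
  exact main_aux M hs ht n hn
end

section
/- Let n and m be positive integers, s, t > 0, and let X and Y be independent real random variables with the Gamma(n, s) and Gamma(m, t) distributions, respectively. Then for every natural number k: E[X^k · 1_{X ≤ Y}] = (Γ(n+k)/(s^k Γ(n))) · I_p(n+k, m), where p = s/(s+t). Consequently, the k-th moment of X conditional on the event {X ≤ Y} equals (Γ(n+k)/(s^k Γ(n))) · I_p(n+k, m)/I_p(n, m). -/
open MeasureTheory ProbabilityTheory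

open scoped ENNReal NNReal
open Real Set intervalIntegral


lemma integrableOn_pow_mul_exp_s6 (j : ℕ) {r : ℝ} (hr : 0 < r) :
    IntegrableOn (fun x : ℝ => x ^ j * Real.exp (-(r * x))) (Ioi 0) := by
  have h := integrableOn_rpow_mul_exp_neg_mul_rpow (p := 1) (s := (j : ℝ)) (b := r)
    (lt_of_lt_of_le (by norm_num) (Nat.cast_nonneg j)) zero_lt_one hr
  refine h.congr_fun (fun x hx => ?_) measurableSet_Ioi
  dsimp only
  rw [Real.rpow_one, Real.rpow_natCast, neg_mul]

lemma integral_pow_mul_exp_s6 (j : ℕ) (hj : 0 < j) {r : ℝ} (hr : 0 < r) :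
    ∫ x in Ioi (0:ℝ), x ^ (j - 1) * Real.exp (-(r * x)) = (1 / r) ^ j * Real.Gamma j := by
  have h := Real.integral_rpow_mul_exp_neg_mul_Ioi (a := (j : ℝ)) (r := r)
    (by exact_mod_cast hj) hr
  rw [← Real.rpow_natCast (1/r) j, ← h]
  refine setIntegral_congr_fun measurableSet_Ioi (fun x hx => ?_)
  have h1 : (j : ℝ) - 1 = ((j - 1 : ℕ) : ℝ) := by
    rw [Nat.cast_sub hj]; norm_num
  rw [h1, Real.rpow_natCast]

section Inner

variable (a k : ℕ) {s : ℝ}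

/-- inner lintegral computation -/
lemma inner_lint (hs : 0 < s) {y : ℝ} (hy : 0 ≤ y) :
    ∫⁻ x in Iic y, gammaPDF (a+1 : ℕ) s x * ENNReal.ofReal (x ^ k)
      = ENNReal.ofReal (s^(a+1) / Real.Gamma (a+1 : ℕ) *
          ∫ x in (0:ℝ)..y, x ^ (a+k) * Real.exp (-(s*x))) := by
  have hΓ : (0:ℝ) < Real.Gamma (a+1 : ℕ) :=
    Real.Gamma_pos_of_pos (by positivity)
  rw [lintegral_Iic_eq_lintegral_Iio_add_Icc _ hy]
  have h1 : ∫⁻ x in Iio (0:ℝ), gammaPDF (a+1 : ℕ) s x * ENNReal.ofReal (x ^ k) = 0 := by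
    rw [setLIntegral_congr_fun (g := fun _ => 0) measurableSet_Iio]
    · exact lintegral_zero
    · intro x hx; dsimp only
      rw [gammaPDF_of_neg hx, zero_mul]
  rw [h1, zero_add]
  have h2 : ∫⁻ x in Icc 0 y, gammaPDF (a+1 : ℕ) s x * ENNReal.ofReal (x ^ k)
      = ∫⁻ x in Icc 0 y, ENNReal.ofReal
          (s^(a+1) / Real.Gamma (a+1 : ℕ) * (x ^ (a+k) * Real.exp (-(s*x)))) := by
    refine setLIntegral_congr_fun measurableSet_Icc ?_
    intro x hx; dsimp only
    rw [gammaPDF_of_nonneg hx.1, ← ENNReal.ofReal_mul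
      (mul_nonneg (mul_nonneg (div_nonneg (Real.rpow_nonneg hs.le _) hΓ.le)
        (Real.rpow_nonneg hx.1 _)) (Real.exp_pos _).le)]
    congr 1
    have e1 : s ^ ((a+1:ℕ) : ℝ) = s ^ (a+1 : ℕ) := Real.rpow_natCast s (a+1)
    have e2 : x ^ (((a+1:ℕ) : ℝ) - 1) = x ^ (a : ℕ) := by
      rw [show (((a+1:ℕ) : ℝ) - 1) = ((a:ℕ) : ℝ) by push_cast; ring, Real.rpow_natCast]
    rw [e1, e2]
    ring
  rw [h2]
  have hcont : Continuous fun x : ℝ => s^(a+1) / Real.Gamma (a+1 : ℕ) *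
      (x ^ (a+k) * Real.exp (-(s*x))) := by fun_prop
  rw [← ofReal_integral_eq_lintegral_ofReal (hcont.integrableOn_Icc)
    (by
      filter_upwards [ae_restrict_mem measurableSet_Icc] with x hx
      simp only [Pi.zero_apply]
      exact mul_nonneg (div_nonneg (by positivity) hΓ.le)
        (mul_nonneg (pow_nonneg hx.1 _) (Real.exp_pos _).le))]
  congr 1
  rw [integral_Icc_eq_integral_Ioc, ← intervalIntegral.integral_of_le hy,
    ← intervalIntegral.integral_const_mul]

end Inner

lemma subst_real' (c b : ℕ) {s t : ℝ} (hs : 0 < s) (ht : 0 < t) :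
    ∫ w in (0:ℝ)..(s/(s+t)), w ^ c * (1-w) ^ b
      = s ^ (c+1) * t ^ (b+1) * ∫ u in (0:ℝ)..1, u ^ c * (1/(t+s*u)) ^ (c+b+2) := by
  have hd : ∀ u : ℝ, 0 ≤ u → t + s * u ≠ 0 := fun u hu => by positivity
  set φ : ℝ → ℝ := fun u => s * u / (t + s * u) with hφ
  set φ' : ℝ → ℝ := fun u => s * t / (t + s * u) ^ 2 with hφ'
  have hderiv : ∀ u ∈ uIcc (0:ℝ) 1, HasDerivAt φ (φ' u) u := by
    intro u hu
    rw [Set.uIcc_of_le (by norm_num : (0:ℝ) ≤ 1)] at hu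
    have h0 : t + s * u ≠ 0 := hd u hu.1
    have h1 : HasDerivAt (fun u : ℝ => s * u) s u := by
      simpa using (hasDerivAt_id u).const_mul s
    have h2 : HasDerivAt (fun u : ℝ => t + s * u) s u := by
      simpa using h1.const_add t
    have := h1.div h2 h0
    refine HasDerivAt.congr_deriv this ?_
    simp only [hφ']
    field_simp
    ring
  have hcont : ContinuousOn φ' (uIcc (0:ℝ) 1) := by
    rw [Set.uIcc_of_le (by norm_num : (0:ℝ) ≤ 1)]
    apply ContinuousOn.div continuousOn_const
    · fun_prop
    · intro u hu; exact pow_ne_zero 2 (hd u hu.1)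
  have hg : Continuous fun w : ℝ => w ^ c * (1-w) ^ b := by fun_prop
  have key := integral_comp_smul_deriv hderiv hcont hg
  have hφ0 : φ 0 = 0 := by simp [hφ]
  have hφ1 : φ 1 = s / (s + t) := by simp [hφ, add_comm t s]
  rw [hφ0, hφ1] at key
  rw [← key, ← intervalIntegral.integral_const_mul]
  refine intervalIntegral.integral_congr (fun u hu => ?_)
  rw [Set.uIcc_of_le (by norm_num : (0:ℝ) ≤ 1)] at hu
  have h0 : (0:ℝ) < t + s * u := by have := hu.1; positivity
  have h1 : 1 - φ u = t / (t + s * u) := by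
    simp only [hφ]
    field_simp
    ring
  have h2 : φ u = s * u / (t + s * u) := rfl
  rw [smul_eq_mul, Function.comp_apply, h1, h2, hφ']
  simp only [div_pow, mul_pow, one_div, inv_pow]
  field_simp
  ring


lemma key_real (A b : ℕ) {s t : ℝ} (hs : 0 < s) (ht : 0 < t) :
    ∫ y in Ioi (0:ℝ), y ^ b * Real.exp (-(t*y)) * (∫ x in (0:ℝ)..y, x ^ A * Real.exp (-(s*x)))
      = Real.Gamma (A+b+2) * ∫ u in (0:ℝ)..1, u ^ A * (1/(t+s*u)) ^ (A+b+2) := by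
  set F : ℝ → ℝ → ℝ := fun y u => y ^ (A+b+1) * u ^ A * Real.exp (-((t+s*u)*y)) with hF
  have step1 : ∫ y in Ioi (0:ℝ), y ^ b * Real.exp (-(t*y)) *
      (∫ x in (0:ℝ)..y, x ^ A * Real.exp (-(s*x)))
      = ∫ y in Ioi (0:ℝ), ∫ u in Ioc (0:ℝ) 1, F y u := by
    refine setIntegral_congr_fun measurableSet_Ioi (fun y hy => ?_)
    rw [mem_Ioi] at hy
    have hsub : (∫ x in (0:ℝ)..y, x ^ A * Real.exp (-(s*x)))
        = y • ∫ u in (0:ℝ)..1, (u*y) ^ A * Real.exp (-(s*(u*y))) := by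
      rw [intervalIntegral.smul_integral_comp_mul_right
        (fun x => x ^ A * Real.exp (-(s*x))) y, zero_mul, one_mul]
    rw [hsub, smul_eq_mul, ← mul_assoc, ← intervalIntegral.integral_const_mul,
      ← intervalIntegral.integral_of_le zero_le_one]
    refine intervalIntegral.integral_congr (fun u hu => ?_)
    rw [hF]
    simp only [mul_pow]
    rw [show (-((t+s*u)*y)) = -(t*y) + -(s*(u*y)) by ring, Real.exp_add]
    ring
  have hint : Integrable (Function.uncurry F)
      ((volume.restrict (Ioi (0:ℝ))).prod (volume.restrict (Ioc (0:ℝ) 1))) := by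
    have hmeas : Continuous (Function.uncurry F) := by
      rw [hF]; unfold Function.uncurry; fun_prop
    have hg : Integrable (fun p : ℝ × ℝ => p.1 ^ (A+b+1) * Real.exp (-(t*p.1)) * 1)
        ((volume.restrict (Ioi (0:ℝ))).prod (volume.restrict (Ioc (0:ℝ) 1))) := by
      exact Integrable.mul_prod (integrableOn_pow_mul_exp_s6 (A+b+1) ht)
        (integrableOn_const measure_Ioc_lt_top.ne)
    refine hg.mono' hmeas.aestronglyMeasurable ?_
    rw [Measure.prod_restrict]
    rw [ae_restrict_iff' (measurableSet_Ioi.prod measurableSet_Ioc)]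
    filter_upwards with p hp
    obtain ⟨hy, hu⟩ := hp
    rw [mem_Ioi] at hy; rw [mem_Ioc] at hu
    have h1 : p.2 ^ A ≤ 1 := pow_le_one₀ hu.1.le hu.2
    have h2 : Real.exp (-((t+s*p.2)*p.1)) ≤ Real.exp (-(t*p.1)) := by
      apply Real.exp_le_exp.mpr
      nlinarith [mul_pos (mul_pos hs hu.1) hy]
    have h3 : (0:ℝ) ≤ p.1 ^ (A+b+1) := by positivity
    rw [Function.uncurry, hF]
    rw [Real.norm_eq_abs, abs_of_nonneg (mul_nonneg (mul_nonneg (pow_nonneg hy.le _)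
      (pow_nonneg hu.1.le _)) (Real.exp_pos _).le)]
    calc p.1 ^ (A+b+1) * p.2 ^ A * Real.exp (-((t+s*p.2)*p.1))
        ≤ p.1 ^ (A+b+1) * (1 * Real.exp (-(t*p.1))) := by
          rw [mul_assoc]
          exact mul_le_mul_of_nonneg_left
            (mul_le_mul h1 h2 (Real.exp_pos _).le zero_le_one) h3
      _ = p.1 ^ (A+b+1) * Real.exp (-(t*p.1)) * 1 := by ring
  have step2 : ∫ y in Ioi (0:ℝ), ∫ u in Ioc (0:ℝ) 1, F y u
      = ∫ u in Ioc (0:ℝ) 1, ∫ y in Ioi (0:ℝ), F y u := integral_integral_swap hint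
  have step3 : ∫ u in Ioc (0:ℝ) 1, ∫ y in Ioi (0:ℝ), F y u
      = ∫ u in Ioc (0:ℝ) 1, (u ^ A * (1/(t+s*u)) ^ (A+b+2)) * Real.Gamma (A+b+2) := by
    refine setIntegral_congr_fun measurableSet_Ioc (fun u hu => ?_)
    rw [mem_Ioc] at hu
    have hr : (0:ℝ) < t + s * u := by nlinarith
    have : ∀ y : ℝ, F y u = u ^ A * (y ^ ((A+b+2) - 1) * Real.exp (-((t+s*u)*y))) := by
      intro y; rw [hF, show A+b+2-1 = A+b+1 by omega]; ring
    simp_rw [this]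
    rw [MeasureTheory.integral_const_mul, integral_pow_mul_exp_s6 (A+b+2) (by omega) hr]
    push_cast
    ring
  rw [step1, step2, step3, MeasureTheory.integral_mul_const,
    intervalIntegral.integral_of_le zero_le_one, mul_comm]


lemma key_prod (n m : ℕ) (hn : 0 < n) (hm : 0 < m) {s t : ℝ} (hs : 0 < s) (ht : 0 < t)
    (k : ℕ) :
    ∫ p in {p : ℝ × ℝ | p.1 ≤ p.2}, p.1 ^ k
        ∂((gammaMeasure n s).prod (gammaMeasure m t)) =
      Real.Gamma (n + k) / (s ^ k * Real.Gamma n) * regIncBeta (n + k) m (s / (s + t)) := by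
  obtain ⟨a, rfl⟩ : ∃ a, n = a + 1 := ⟨n - 1, by omega⟩
  obtain ⟨b, rfl⟩ : ∃ b, m = b + 1 := ⟨m - 1, by omega⟩
  clear hn hm
  have hna : (0:ℝ) < ((a:ℝ) + 1) := by positivity
  have hΓa : (0:ℝ) < Real.Gamma ((a+1 : ℕ) : ℝ) := Real.Gamma_pos_of_pos (by push_cast; positivity)
  have hΓb : (0:ℝ) < Real.Gamma ((b+1 : ℕ) : ℝ) := Real.Gamma_pos_of_pos (by push_cast; positivity)
  haveI : IsProbabilityMeasure (gammaMeasure (a+1 : ℕ) s) :=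
    isProbabilityMeasure_gammaMeasure (by push_cast; positivity) hs
  haveI : IsProbabilityMeasure (gammaMeasure (b+1 : ℕ) t) :=
    isProbabilityMeasure_gammaMeasure (by push_cast; positivity) ht
  set μ := gammaMeasure (a+1 : ℕ) s with hμdef
  set ν := gammaMeasure (b+1 : ℕ) t with hνdef
  set S : Set (ℝ × ℝ) := {p : ℝ × ℝ | p.1 ≤ p.2} with hSdef
  have hS : MeasurableSet S := measurableSet_le measurable_fst measurable_snd
  set G : ℝ → ℝ := fun y => ∫ x in (0:ℝ)..y, x ^ (a+k) * Real.exp (-(s*x)) with hGdef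
  set c₁ : ℝ := s^(a+1) / Real.Gamma ((a+1 : ℕ) : ℝ) with hc₁
  set c₂ : ℝ := t^(b+1) / Real.Gamma ((b+1 : ℕ) : ℝ) with hc₂
  -- nonneg a.e.
  have hprod0 : (μ.prod ν) {p : ℝ × ℝ | p.1 < 0} = 0 := by
    have : {p : ℝ × ℝ | p.1 < 0} = (Iio (0:ℝ)) ×ˢ (univ : Set ℝ) := by
      ext p; simp
    rw [this, Measure.prod_prod]
    have : μ (Iio 0) = 0 := by
      rw [hμdef, gammaMeasure, withDensity_apply _ measurableSet_Iio,
        lintegral_gammaPDF_of_nonpos le_rfl]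
    rw [this, zero_mul]
  have hae : ∀ᵐ p ∂(μ.prod ν), 0 ≤ p.1 := by
    rw [ae_iff]
    convert hprod0 using 2
    ext p; simp
  -- to lintegral
  rw [integral_eq_lintegral_of_nonneg_ae
    (ae_restrict_of_ae (hae.mono fun p hp => pow_nonneg hp k))
    (measurable_fst.pow_const k).aestronglyMeasurable.restrict]
  -- lintegral computation
  set f : ℝ × ℝ → ℝ≥0∞ := S.indicator (fun p => ENNReal.ofReal (p.1 ^ k)) with hfdef
  have hfmeas : Measurable f :=
    ((measurable_fst.pow_const k).ennreal_ofReal).indicator hS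
  have l1 : ∫⁻ p in S, ENNReal.ofReal (p.1 ^ k) ∂(μ.prod ν) = ∫⁻ p, f p ∂(μ.prod ν) :=
    (lintegral_indicator hS _).symm
  have l2 : ∫⁻ p, f p ∂(μ.prod ν) = ∫⁻ y, ∫⁻ x, f (x, y) ∂μ ∂ν :=
    lintegral_prod_symm f hfmeas.aemeasurable
  have hinner_ind : ∀ y : ℝ, (∫⁻ x, f (x, y) ∂μ)
      = ∫⁻ x in Iic y, gammaPDF (a+1 : ℕ) s x * ENNReal.ofReal (x ^ k) := by
    intro y
    have hpdfm : Measurable (gammaPDF (a+1 : ℕ) s) := (measurable_gammaPDFReal _ _).ennreal_ofReal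
    have hg : Measurable fun x : ℝ => f (x, y) :=
      hfmeas.comp (measurable_id.prodMk measurable_const)
    rw [hμdef, gammaMeasure, lintegral_withDensity_eq_lintegral_mul _ hpdfm hg,
      ← lintegral_indicator measurableSet_Iic]
    congr 1
    ext x
    by_cases hxy : x ≤ y
    · simp [hfdef, hSdef, Set.indicator_of_mem, hxy, gammaPDF]
    · simp [hfdef, hSdef, Set.indicator_of_notMem, hxy]
  have hΦmeas : Measurable fun y => ∫⁻ x in Iic y, gammaPDF (a+1 : ℕ) s x *
      ENNReal.ofReal (x ^ k) := by
    simp_rw [← hinner_ind]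
    exact Measurable.lintegral_prod_left' hfmeas
  have l3 : ∫⁻ y, ∫⁻ x, f (x, y) ∂μ ∂ν
      = ∫⁻ y, gammaPDF (b+1 : ℕ) t y * (∫⁻ x in Iic y, gammaPDF (a+1 : ℕ) s x *
          ENNReal.ofReal (x ^ k)) ∂volume := by
    simp_rw [hinner_ind]
    have hpdfm : Measurable (gammaPDF (b+1 : ℕ) t) := (measurable_gammaPDFReal _ _).ennreal_ofReal
    rw [hνdef, gammaMeasure, lintegral_withDensity_eq_lintegral_mul _ hpdfm hΦmeas]
    rfl
  -- continuity and bounds for G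
  have hGcont : Continuous G := by
    rw [hGdef]
    exact intervalIntegral.continuous_primitive
      (fun c d => (by fun_prop : Continuous fun x : ℝ => x ^ (a+k) * Real.exp (-(s*x))).intervalIntegrable c d) 0
  set M : ℝ := ∫ x in Ioi (0:ℝ), x ^ (a+k) * Real.exp (-(s*x)) with hM
  have hGnonneg : ∀ y : ℝ, 0 ≤ y → 0 ≤ G y := by
    intro y hy
    refine intervalIntegral.integral_nonneg hy (fun x hx => ?_)
    exact mul_nonneg (pow_nonneg hx.1 _) (Real.exp_pos _).le
  have hGle : ∀ y : ℝ, 0 ≤ y → G y ≤ M := by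
    intro y hy
    rw [hGdef]
    simp only []
    rw [intervalIntegral.integral_of_le hy]
    refine setIntegral_mono_set (integrableOn_pow_mul_exp_s6 (a+k) hs) ?_
      (HasSubset.Subset.eventuallyLE Ioc_subset_Ioi_self)
    filter_upwards [ae_restrict_mem measurableSet_Ioi] with x hx
    exact mul_nonneg (pow_nonneg (le_of_lt hx) _) (Real.exp_pos _).le
  set H : ℝ → ℝ := fun y => c₂ * (y ^ b * Real.exp (-(t*y))) * (c₁ * G y) with hHdef
  have hHcont : Continuous H := by fun_prop
  have hc₁0 : 0 ≤ c₁ := div_nonneg (by positivity) hΓa.le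
  have hc₂0 : 0 ≤ c₂ := div_nonneg (by positivity) hΓb.le
  have hHint : IntegrableOn H (Ici (0:ℝ)) := by
    have hbd : IntegrableOn (fun y : ℝ => c₂ * (y ^ b * Real.exp (-(t*y))) * (c₁ * M))
        (Ici (0:ℝ)) := by
      rw [integrableOn_Ici_iff_integrableOn_Ioi]
      exact (((integrableOn_pow_mul_exp_s6 b ht).const_mul c₂).mul_const (c₁ * M))
    refine hbd.mono' hHcont.aestronglyMeasurable.restrict ?_
    filter_upwards [ae_restrict_mem measurableSet_Ici] with y hy
    have h1 : 0 ≤ y := hy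
    have h2 : 0 ≤ c₂ * (y ^ b * Real.exp (-(t*y))) :=
      mul_nonneg hc₂0 (mul_nonneg (pow_nonneg h1 _) (Real.exp_pos _).le)
    rw [Real.norm_eq_abs, abs_of_nonneg (mul_nonneg h2 (mul_nonneg hc₁0 (hGnonneg y h1)))]
    exact mul_le_mul_of_nonneg_left
      (mul_le_mul_of_nonneg_left (hGle y h1) hc₁0) h2
  have hHnonneg : 0 ≤ᵐ[volume.restrict (Ici (0:ℝ))] H := by
    filter_upwards [ae_restrict_mem measurableSet_Ici] with y hy
    exact mul_nonneg (mul_nonneg hc₂0 (mul_nonneg (pow_nonneg hy _) (Real.exp_pos _).le))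
      (mul_nonneg hc₁0 (hGnonneg y hy))
  have l4 : ∫⁻ y, gammaPDF (b+1 : ℕ) t y * (∫⁻ x in Iic y, gammaPDF (a+1 : ℕ) s x *
      ENNReal.ofReal (x ^ k)) ∂volume = ENNReal.ofReal (∫ y in Ici (0:ℝ), H y) := by
    rw [← lintegral_add_compl (μ := volume) _ measurableSet_Ici, compl_Ici]
    have hIio : ∫⁻ y in Iio (0:ℝ), gammaPDF (b+1 : ℕ) t y * (∫⁻ x in Iic y,
        gammaPDF (a+1 : ℕ) s x * ENNReal.ofReal (x ^ k)) = 0 := by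
      rw [setLIntegral_congr_fun (g := fun _ => 0) measurableSet_Iio]
      · exact lintegral_zero
      · intro y hy; dsimp only
        rw [gammaPDF_of_neg hy, zero_mul]
    rw [hIio, add_zero]
    have hIci : ∫⁻ y in Ici (0:ℝ), gammaPDF (b+1 : ℕ) t y * (∫⁻ x in Iic y,
        gammaPDF (a+1 : ℕ) s x * ENNReal.ofReal (x ^ k))
        = ∫⁻ y in Ici (0:ℝ), ENNReal.ofReal (H y) := by
      refine setLIntegral_congr_fun measurableSet_Ici ?_
      intro y hy; dsimp only
      rw [inner_lint a k hs hy, gammaPDF_of_nonneg hy, ← ENNReal.ofReal_mul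
        (mul_nonneg (mul_nonneg (div_nonneg (Real.rpow_nonneg ht.le _) hΓb.le)
          (Real.rpow_nonneg hy _)) (Real.exp_pos _).le)]
      congr 1
      have e1 : t ^ (((b+1:ℕ)) : ℝ) = t ^ (b+1 : ℕ) := Real.rpow_natCast t (b+1)
      have e2 : y ^ ((((b+1:ℕ)) : ℝ) - 1) = y ^ (b : ℕ) := by
        rw [show ((((b+1:ℕ)) : ℝ) - 1) = ((b:ℕ) : ℝ) by push_cast; ring, Real.rpow_natCast]
      rw [hHdef]
      simp only [e1, e2]
      rw [hc₂, hc₁, hGdef]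
      ring
    rw [hIci, ← ofReal_integral_eq_lintegral_ofReal hHint hHnonneg]
  -- real computation
  have hreal : ∫ y in Ici (0:ℝ), H y
      = (c₁ * c₂) * (Real.Gamma ((a+k)+b+2) *
          ∫ u in (0:ℝ)..1, u ^ (a+k) * (1/(t+s*u)) ^ ((a+k)+b+2)) := by
    rw [integral_Ici_eq_integral_Ioi]
    have : ∀ y : ℝ, H y = (c₁ * c₂) * (y ^ b * Real.exp (-(t*y)) * G y) := by
      intro y; rw [hHdef]; ring
    simp_rw [this]
    rw [MeasureTheory.integral_const_mul]
    congr 1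
    have hkr := key_real (a+k) b hs ht
    push_cast at hkr ⊢
    rw [hGdef]
    simpa using hkr
  -- put together
  rw [l1, l2, l3, l4, hreal]
  set J : ℝ := ∫ u in (0:ℝ)..1, u ^ (a+k) * (1/(t+s*u)) ^ ((a+k)+b+2) with hJ
  have hJ0 : 0 ≤ J := by
    refine intervalIntegral.integral_nonneg zero_le_one (fun u hu => ?_)
    have h1 : (0:ℝ) < t + s * u := by nlinarith [hu.1]
    exact mul_nonneg (pow_nonneg hu.1 _) (pow_nonneg (by positivity) _)
  have hΓak : (0:ℝ) < Real.Gamma ((a+1+k : ℕ) : ℝ) :=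
    Real.Gamma_pos_of_pos (by push_cast; positivity)
  rw [ENNReal.toReal_ofReal (mul_nonneg (mul_nonneg hc₁0 hc₂0)
    (mul_nonneg (Real.Gamma_nonneg_of_nonneg (by positivity)) hJ0))]
  simp only [regIncBeta, show (a+1+k) - 1 = a+k by omega, show (b+1) - 1 = b by omega]
  rw [subst_real' (a+k) b hs ht]
  have e1 : ((a+1:ℕ):ℝ) + (k:ℝ) = ((a+1+k : ℕ):ℝ) := by push_cast; ring
  have e2 : ((a:ℕ):ℝ) + ((k:ℕ):ℝ) + ((b:ℕ):ℝ) + 2 = ((a+1+k:ℕ):ℝ) + ((b+1:ℕ):ℝ) := by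
    push_cast; ring
  rw [e1, e2, ← hJ, hc₁, hc₂]
  field_simp
  ring

/-- If `X ~ Gamma(n, s)` and `Y ~ Gamma(m, t)` are independent, then for every `k : ℕ`,
`E[X^k ⬝ 1_{X ≤ Y}] = (Γ(n+k)/(s^k Γ(n))) ⬝ I_p(n+k, m)` with `p = s/(s+t)`;
consequently the `k`-th moment of `X` conditional on `{X ≤ Y}` is
`(Γ(n+k)/(s^k Γ(n))) ⬝ I_p(n+k, m)/I_p(n, m)`. -/
theorem moment_on_le_event_eq
    {Ω : Type*} {mΩ : MeasurableSpace Ω} (P : Measure Ω) [IsProbabilityMeasure P]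
    (n m : ℕ) (hn : 0 < n) (hm : 0 < m) (s t : ℝ) (hs : 0 < s) (ht : 0 < t)
    (X Y : Ω → ℝ)
    (hX : Measure.map X P = gammaMeasure n s)
    (hY : Measure.map Y P = gammaMeasure m t)
    (hXY : IndepFun X Y P) (k : ℕ) :
    (∫ ω in {ω | X ω ≤ Y ω}, X ω ^ k ∂P =
        Real.Gamma (n + k) / (s ^ k * Real.Gamma n) *
          regIncBeta (n + k) m (s / (s + t))) ∧
      (∫ ω in {ω | X ω ≤ Y ω}, X ω ^ k ∂P) / (P {ω | X ω ≤ Y ω}).toReal =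
        Real.Gamma (n + k) / (s ^ k * Real.Gamma n) *
          (regIncBeta (n + k) m (s / (s + t)) / regIncBeta n m (s / (s + t))) := by
  have hΓn : (0:ℝ) < Real.Gamma n := Real.Gamma_pos_of_pos (by exact_mod_cast hn)
  haveI hPμ : IsProbabilityMeasure (gammaMeasure n s) :=
    isProbabilityMeasure_gammaMeasure (by exact_mod_cast hn) hs
  haveI hPν : IsProbabilityMeasure (gammaMeasure m t) :=
    isProbabilityMeasure_gammaMeasure (by exact_mod_cast hm) ht
  have hXae : AEMeasurable X P := by
    by_contra h
    have h1 : (gammaMeasure n s) univ = 1 := measure_univ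
    rw [← hX, Measure.map_of_not_aemeasurable h] at h1
    simp at h1
  have hYae : AEMeasurable Y P := by
    by_contra h
    have h1 : (gammaMeasure m t) univ = 1 := measure_univ
    rw [← hY, Measure.map_of_not_aemeasurable h] at h1
    simp at h1
  set X' := hXae.mk X with hX'def
  set Y' := hYae.mk Y with hY'def
  have hX'm : Measurable X' := hXae.measurable_mk
  have hY'm : Measurable Y' := hYae.measurable_mk
  have hXX' : X =ᵐ[P] X' := hXae.ae_eq_mk
  have hYY' : Y =ᵐ[P] Y' := hYae.ae_eq_mk
  have hXmap : Measure.map X' P = gammaMeasure n s := by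
    rw [← Measure.map_congr hXX']; exact hX
  have hYmap : Measure.map Y' P = gammaMeasure m t := by
    rw [← Measure.map_congr hYY']; exact hY
  have hXY' : IndepFun X' Y' P := hXY.congr hXX' hYY'
  set S : Set (ℝ × ℝ) := {p : ℝ × ℝ | p.1 ≤ p.2} with hSdef
  have hS : MeasurableSet S := measurableSet_le measurable_fst measurable_snd
  have hEE : {ω | X ω ≤ Y ω} =ᵐ[P] {ω | X' ω ≤ Y' ω} := by
    filter_upwards [hXX', hYY'] with ω h1 h2
    change (X ω ≤ Y ω) = (X' ω ≤ Y' ω)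
    rw [h1, h2]
  have hE'm : MeasurableSet {ω | X' ω ≤ Y' ω} := measurableSet_le hX'm hY'm
  have hpair : Measure.map (fun ω => (X' ω, Y' ω)) P
      = (gammaMeasure n s).prod (gammaMeasure m t) := by
    rw [← hXmap, ← hYmap]
    exact (indepFun_iff_map_prod_eq_prod_map_map hX'm.aemeasurable hY'm.aemeasurable).mp hXY'
  have hEeq : ∀ j : ℕ, ∫ ω in {ω | X ω ≤ Y ω}, X ω ^ j ∂P
      = ∫ p in S, p.1 ^ j ∂((gammaMeasure n s).prod (gammaMeasure m t)) := by
    intro j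
    rw [setIntegral_congr_set hEE]
    have h1 : ∫ ω in {ω | X' ω ≤ Y' ω}, X ω ^ j ∂P
        = ∫ ω in {ω | X' ω ≤ Y' ω}, X' ω ^ j ∂P :=
      integral_congr_ae (ae_restrict_of_ae (hXX'.mono fun ω h => by simp only [h]))
    rw [h1, ← MeasureTheory.integral_indicator hE'm]
    have hind : ∀ ω, {ω | X' ω ≤ Y' ω}.indicator (fun ω => X' ω ^ j) ω
        = S.indicator (fun p => p.1 ^ j) (X' ω, Y' ω) := by
      intro ω; by_cases h : X' ω ≤ Y' ω <;> simp [Set.indicator, h, hSdef]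
    simp_rw [hind]
    rw [← MeasureTheory.integral_indicator hS, ← hpair,
      integral_map (hX'm.prodMk hY'm).aemeasurable
        ((measurable_fst.pow_const j).indicator hS).aestronglyMeasurable]
  have hPE : P {ω | X ω ≤ Y ω} = ((gammaMeasure n s).prod (gammaMeasure m t)) S := by
    rw [measure_congr hEE, ← hpair, Measure.map_apply (hX'm.prodMk hY'm) hS]
    rfl
  have key := key_prod n m hn hm hs ht
  have hPE' : (P {ω | X ω ≤ Y ω}).toReal = regIncBeta n m (s / (s + t)) := by
    have h00 := key 0
    simp only [pow_zero, Nat.add_zero, Nat.cast_zero, add_zero, one_mul] at h00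
    rw [MeasureTheory.setIntegral_const, smul_eq_mul, mul_one, div_self hΓn.ne', one_mul] at h00
    rw [hPE]; exact h00
  refine ⟨by rw [hEeq k, key k], ?_⟩
  rw [hEeq k, key k, hPE', mul_div_assoc]
end

section
/- Let n and m be positive integers, s, t > 0, and let X and Y be independent real random variables with the Gamma(n, s) and Gamma(m, t) distributions, respectively. Then for every natural number k: E[Y^k · 1_{X ≤ Y}] = (Γ(m+k)/(t^k Γ(m))) · I_p(n, m+k), where p = s/(s+t). Consequently, the k-th moment of Y conditional on the event {X ≤ Y} equals (Γ(m+k)/(t^k Γ(m))) · I_p(n, m+k)/I_p(n, m). -/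
open MeasureTheory ProbabilityTheory

section auxGamma
open MeasureTheory Real Set intervalIntegral ProbabilityTheory
open scoped NNReal ENNReal

lemma lemA_int (j : ℕ) {l : ℝ} (hl : 0 < l) :
    IntegrableOn (fun y : ℝ => y ^ j * Real.exp (-(l * y))) (Ioi 0) := by
  have h := integrableOn_rpow_mul_exp_neg_mul_rpow (p := 1) (s := (j : ℝ)) (b := l)
    (lt_of_lt_of_le neg_one_lt_zero j.cast_nonneg) zero_lt_one hl
  simpa [Real.rpow_natCast, neg_mul] using h

lemma lemA_val (j : ℕ) {l : ℝ} (hl : 0 < l) :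
    ∫ y in Ioi (0:ℝ), y ^ j * Real.exp (-(l * y)) = Real.Gamma (j + 1) / l ^ (j + 1) := by
  have h := integral_rpow_mul_exp_neg_mul_Ioi (a := (j : ℝ) + 1) (by positivity) hl
  rw [show ((j : ℝ) + 1) - 1 = (j : ℝ) by ring] at h
  simp only [Real.rpow_natCast] at h
  rw [show ((j : ℝ) + 1) = ((j + 1 : ℕ) : ℝ) by push_cast; ring, Real.rpow_natCast] at h
  rw [h, one_div, inv_pow]
  push_cast
  ring

lemma lemB (n M : ℕ) (hn : 0 < n) (hM : 0 < M) {s t : ℝ} (hs : 0 < s) (ht : 0 < t) :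
    ∫ u in (0:ℝ)..(s/(s+t)), u ^ (n-1) * (1-u) ^ (M-1)
      = s ^ n * t ^ M * ∫ r in (0:ℝ)..1, r ^ (n-1) / (t + s*r) ^ (n+M) := by
  obtain ⟨n', rfl⟩ : ∃ k, n = k + 1 := ⟨n - 1, by omega⟩
  obtain ⟨M', rfl⟩ : ∃ k, M = k + 1 := ⟨M - 1, by omega⟩
  simp only [Nat.add_sub_cancel]
  have hden : ∀ r ∈ uIcc (0:ℝ) 1, 0 < t + s * r := by
    rw [uIcc_of_le zero_le_one]
    intro r hr
    nlinarith [hr.1]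
  have hd : ∀ r ∈ uIcc (0:ℝ) 1,
      HasDerivAt (fun r => s * r / (t + s * r)) (s * t / (t + s * r) ^ 2) r := by
    intro r hr
    have h1 : HasDerivAt (fun r : ℝ => s * r) s r := by
      simpa using (hasDerivAt_id r).const_mul s
    have h2 : HasDerivAt (fun r : ℝ => t + s * r) s r := by
      simpa using h1.const_add t
    have := h1.div h2 (hden r hr).ne'
    rw [show s * t / (t + s * r) ^ 2 = (s * (t + s * r) - s * r * s) / (t + s * r) ^ 2 by ring]
    exact this
  have hcont : ContinuousOn (fun r : ℝ => s * t / (t + s * r) ^ 2) (uIcc (0:ℝ) 1) := by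
    refine ContinuousOn.div continuousOn_const (by fun_prop) ?_
    intro r hr
    exact pow_ne_zero _ (hden r hr).ne'
  have hg : Continuous (fun u : ℝ => u ^ n' * (1 - u) ^ M') := by fun_prop
  have h := integral_comp_smul_deriv hd hcont hg
  have e0 : s * (0:ℝ) / (t + s * 0) = 0 := by simp
  have e1 : s * (1:ℝ) / (t + s * 1) = s / (s + t) := by rw [mul_one, add_comm t s]
  rw [e0, e1] at h
  rw [← h, ← intervalIntegral.integral_const_mul]
  refine intervalIntegral.integral_congr fun r hr => ?_
  have hd0 : (0:ℝ) < t + s * r := hden r hr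
  have h1u : 1 - s * r / (t + s * r) = t / (t + s * r) := by field_simp; ring
  simp only [smul_eq_mul, Function.comp_apply, h1u]
  rw [div_pow, div_pow]
  field_simp
  ring

lemma lemC (n : ℕ) (hn : 0 < n) (s : ℝ) {y : ℝ} (hy : 0 < y) :
    ∫ x in (0:ℝ)..y, x ^ (n-1) * Real.exp (-(s*x))
      = y ^ n * ∫ r in (0:ℝ)..1, r ^ (n-1) * Real.exp (-(s*r*y)) := by
  have h := intervalIntegral.integral_comp_mul_left
    (f := fun x => x ^ (n-1) * Real.exp (-(s*x))) (a := (0:ℝ)) (b := 1) (c := y) hy.ne'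
  rw [mul_zero, mul_one] at h
  rw [← intervalIntegral.integral_const_mul]
  rw [show (∫ x in (0:ℝ)..y, x ^ (n-1) * Real.exp (-(s*x)))
      = y • ∫ x in (0:ℝ)..1, (y*x) ^ (n-1) * Real.exp (-(s*(y*x))) by
    rw [h, smul_smul, mul_inv_cancel₀ hy.ne', one_smul]]
  rw [smul_eq_mul, ← intervalIntegral.integral_const_mul]
  refine intervalIntegral.integral_congr fun r hr => ?_
  rw [mul_pow]
  rw [show y * (y ^ (n-1) * r ^ (n-1) * Real.exp (-(s*(y*r))))
    = (y * y ^ (n-1)) * (r ^ (n-1) * Real.exp (-(s*(y*r)))) by ring]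
  rw [show y * y ^ (n-1) = y ^ n by rw [← pow_succ']; congr 1; omega]
  rw [show -(s*(y*r)) = -(s*r*y) by ring]

lemma lemD (n M : ℕ) (hn : 0 < n) (hM : 0 < M) {s t : ℝ} (hs : 0 < s) (ht : 0 < t) :
    ∫ y in Ioi (0:ℝ), (y ^ (M-1) * Real.exp (-(t*y))) * ∫ x in (0:ℝ)..y, x ^ (n-1) * Real.exp (-(s*x))
      = Real.Gamma (↑(n+M)) / (s ^ n * t ^ M) *
          ∫ u in (0:ℝ)..(s/(s+t)), u ^ (n-1) * (1-u) ^ (M-1) := by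
  set K := n + M with hK
  set G : ℝ → ℝ → ℝ := fun y r => r ^ (n-1) * (y ^ (K-1) * Real.exp (-((t + s*r) * y))) with hG
  -- step 1 : rewrite the integrand
  have step1 : ∀ y ∈ Ioi (0:ℝ),
      (y ^ (M-1) * Real.exp (-(t*y))) * ∫ x in (0:ℝ)..y, x ^ (n-1) * Real.exp (-(s*x))
        = ∫ r in Ioc (0:ℝ) 1, G y r := by
    intro y hy
    rw [lemC n hn s hy]
    rw [← intervalIntegral.integral_of_le zero_le_one,
      ← intervalIntegral.integral_const_mul, ← intervalIntegral.integral_const_mul]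
    refine intervalIntegral.integral_congr fun r hr => ?_
    simp only [hG]
    rw [show -((t + s*r) * y) = (-(t*y)) + (-(s*r*y)) by ring, Real.exp_add]
    rw [show y ^ (M-1) * Real.exp (-(t*y)) * (y ^ n * (r ^ (n-1) * Real.exp (-(s*r*y))))
      = r ^ (n-1) * ((y ^ n * y ^ (M-1)) * (Real.exp (-(t*y)) * Real.exp (-(s*r*y)))) by ring]
    rw [show y ^ n * y ^ (M-1) = y ^ (K-1) by rw [← pow_add]; congr 1; omega]
  rw [setIntegral_congr_fun measurableSet_Ioi step1]
  -- integrability on the product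
  have hGmeas : AEStronglyMeasurable (Function.uncurry G)
      ((volume.restrict (Ioi (0:ℝ))).prod (volume.restrict (Ioc (0:ℝ) 1))) := by
    apply Measurable.aestronglyMeasurable
    fun_prop
  have hsec : ∀ r ∈ Ioc (0:ℝ) 1, Integrable (fun y => G y r) (volume.restrict (Ioi 0)) := by
    intro r hr
    have : (0:ℝ) < t + s * r := by nlinarith [hr.1]
    exact ((lemA_int (K-1) this).const_mul _)
  have hbound : ∀ r ∈ Ioc (0:ℝ) 1, ∀ y ∈ Ioi (0:ℝ),
      ‖G y r‖ ≤ y ^ (K-1) * Real.exp (-(t*y)) := by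
    intro r hr y hy
    have hy0 : (0:ℝ) < y := hy
    have h1 : ‖G y r‖ = r ^ (n-1) * (y ^ (K-1) * Real.exp (-((t + s*r) * y))) := by
      rw [Real.norm_eq_abs, abs_of_nonneg]
      have hr0 : (0:ℝ) ≤ r := hr.1.le
      positivity
    rw [h1]
    have hr1 : r ^ (n-1) ≤ 1 := pow_le_one₀ hr.1.le hr.2
    have hexp : Real.exp (-((t + s*r) * y)) ≤ Real.exp (-(t*y)) := by
      apply Real.exp_le_exp.mpr
      nlinarith [mul_pos (mul_pos hs hr.1) hy0]
    calc r ^ (n-1) * (y ^ (K-1) * Real.exp (-((t + s*r) * y)))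
        ≤ 1 * (y ^ (K-1) * Real.exp (-(t*y))) := by
          apply mul_le_mul hr1 _ (by positivity) zero_le_one
          exact mul_le_mul_of_nonneg_left hexp (by positivity)
      _ = y ^ (K-1) * Real.exp (-(t*y)) := one_mul _
  have hsec2 : ∀ y ∈ Ioi (0:ℝ), Integrable (fun r => G y r) (volume.restrict (Ioc 0 1)) := by
    intro y hy
    apply Continuous.integrableOn_Ioc
    fun_prop
  have hInt : Integrable (Function.uncurry G)
      ((volume.restrict (Ioi (0:ℝ))).prod (volume.restrict (Ioc (0:ℝ) 1))) := by
    rw [integrable_prod_iff hGmeas]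
    constructor
    · rw [ae_restrict_iff' measurableSet_Ioi]
      exact ae_of_all _ hsec2
    · have hmeas2 : AEStronglyMeasurable
          (fun y => ∫ r in Ioc (0:ℝ) 1, ‖Function.uncurry G (y, r)‖)
          (volume.restrict (Ioi (0:ℝ))) := hGmeas.norm.integral_prod_right'
      refine Integrable.mono' (lemA_int (K-1) ht) hmeas2 ?_
      rw [ae_restrict_iff' measurableSet_Ioi]
      refine ae_of_all _ fun y hy => ?_
      have h0 : 0 ≤ ∫ r in Ioc (0:ℝ) 1, ‖Function.uncurry G (y, r)‖ :=
        integral_nonneg fun r => norm_nonneg _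
      rw [Real.norm_eq_abs, abs_of_nonneg h0]
      calc (∫ r in Ioc (0:ℝ) 1, ‖Function.uncurry G (y, r)‖)
          ≤ ∫ _r in Ioc (0:ℝ) 1, y ^ (K-1) * Real.exp (-(t*y)) := by
            apply setIntegral_mono_on (hsec2 y hy).norm
              ((integrableOn_const_iff (by finiteness)).mpr (Or.inr measure_Ioc_lt_top)) measurableSet_Ioc
            exact fun r hr => hbound r hr y hy
        _ = y ^ (K-1) * Real.exp (-(t*y)) := by
            rw [setIntegral_const]
            simp [Real.volume_Ioc]
  -- swap
  rw [MeasureTheory.integral_integral_swap hInt]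
  -- inner integral
  have step3 : ∀ r ∈ Ioc (0:ℝ) 1,
      (∫ y in Ioi (0:ℝ), G y r) = Real.Gamma (↑K) * (r ^ (n-1) / (t + s*r) ^ K) := by
    intro r hr
    have hpos : (0:ℝ) < t + s * r := by nlinarith [hr.1]
    simp only [hG]
    rw [MeasureTheory.integral_const_mul, lemA_val (K-1) hpos]
    rw [show (K-1) + 1 = K by omega]
    rw [show ((K-1 : ℕ) : ℝ) + 1 = (K : ℝ) by
      have : 1 ≤ K := by omega
      push_cast [Nat.cast_sub this]
      ring]
    ring
  rw [setIntegral_congr_fun measurableSet_Ioc step3]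
  rw [MeasureTheory.integral_const_mul]
  rw [← intervalIntegral.integral_of_le zero_le_one, lemB n M hn hM hs ht]
  have h1 : (0:ℝ) < s ^ n * t ^ M := by positivity
  field_simp
  ring

open ProbabilityTheory

lemma pdf_eq (n : ℕ) (hn : 0 < n) {s : ℝ} {x : ℝ} (hx : 0 ≤ x) :
    gammaPDFReal n s x = s ^ n / Real.Gamma n * (x ^ (n-1) * Real.exp (-(s*x))) := by
  rw [gammaPDFReal, if_pos hx]
  have e : ((n:ℝ) - 1) = ((n - 1 : ℕ) : ℝ) := by
    rw [Nat.cast_sub (by omega)]; norm_num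
  rw [e, Real.rpow_natCast, Real.rpow_natCast, mul_assoc]

lemma cdf_eq (n : ℕ) (hn : 0 < n) {s : ℝ} (hs : 0 < s) {y : ℝ} (hy : 0 ≤ y) :
    (gammaMeasure n s (Iic y)).toReal
      = s ^ n / Real.Gamma n * ∫ x in (0:ℝ)..y, x ^ (n-1) * Real.exp (-(s*x)) := by
  have hIcc : IntegrableOn (gammaPDFReal n s) (Icc 0 y) := by
    have hc : Continuous (fun x : ℝ => s ^ n / Real.Gamma n * (x ^ (n-1) * Real.exp (-(s*x)))) := by
      fun_prop
    exact (hc.integrableOn_Icc).congr_fun (fun x hx => (pdf_eq n hn hx.1).symm) measurableSet_Icc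
  have h1 : gammaMeasure n s (Iic y) = ∫⁻ x in Iic y, gammaPDF n s x := by
    rw [gammaMeasure, withDensity_apply _ measurableSet_Iic]
  rw [h1, lintegral_Iic_eq_lintegral_Iio_add_Icc _ hy, lintegral_gammaPDF_of_nonpos le_rfl,
    zero_add]
  have h2 : ∫⁻ x in Icc 0 y, gammaPDF n s x
      = ENNReal.ofReal (∫ x in Icc 0 y, gammaPDFReal n s x) := by
    rw [ofReal_integral_eq_lintegral_ofReal hIcc]
    · rfl
    · exact ae_of_all _ fun x => gammaPDFReal_nonneg (by positivity) hs x
  rw [h2, ENNReal.toReal_ofReal (setIntegral_nonneg measurableSet_Icc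
    (fun x _ => gammaPDFReal_nonneg (by positivity) hs x))]
  rw [setIntegral_congr_fun measurableSet_Icc (fun x hx => pdf_eq n hn hx.1)]
  rw [integral_Icc_eq_integral_Ioc, ← intervalIntegral.integral_of_le hy,
    intervalIntegral.integral_const_mul]

lemma moment_integrable (m k : ℕ) (hm : 0 < m) {t : ℝ} (ht : 0 < t) :
    Integrable (fun y : ℝ => |y| ^ k) (gammaMeasure m t) := by
  rw [gammaMeasure,
    show gammaPDF (m:ℝ) t = (fun x => ENNReal.ofReal (gammaPDFReal m t x)) from rfl,
    integrable_withDensity_iff ((measurable_gammaPDFReal m t).ennreal_ofReal)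
      (ae_of_all _ fun x => ENNReal.ofReal_lt_top)]
  have he : ∀ y : ℝ, |y| ^ k * (ENNReal.ofReal (gammaPDFReal m t y)).toReal
      = |y| ^ k * gammaPDFReal m t y := by
    intro y
    rw [ENNReal.toReal_ofReal (gammaPDFReal_nonneg (by positivity) ht y)]
  simp_rw [he]
  set w : ℝ → ℝ := fun y => |y| ^ k * gammaPDFReal m t y with hw
  have hIoi : IntegrableOn w (Ioi 0) := by
    have : IntegrableOn (fun y : ℝ => t ^ m / Real.Gamma m * (y ^ (m+k-1) * Real.exp (-(t*y))))
        (Ioi 0) := (lemA_int (m+k-1) ht).const_mul _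
    refine this.congr_fun (fun y hy => ?_) measurableSet_Ioi
    have hy0 : (0:ℝ) < y := hy
    rw [hw]
    simp only
    rw [pdf_eq m hm hy0.le, abs_of_nonneg hy0.le]
    rw [show y ^ k * (t ^ m / Real.Gamma m * (y ^ (m-1) * Real.exp (-(t*y))))
      = t ^ m / Real.Gamma m * ((y ^ k * y ^ (m-1)) * Real.exp (-(t*y))) by ring]
    rw [show y ^ k * y ^ (m-1) = y ^ (m+k-1) by rw [← pow_add]; congr 1; omega]
  have hae : (Ioi (0:ℝ)).indicator w =ᵐ[volume] w := by
    have h0 : ({(0:ℝ)} : Set ℝ)ᶜ ∈ ae volume := compl_mem_ae_iff.mpr (measure_singleton 0)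
    filter_upwards [h0] with y hy
    rcases lt_trichotomy y 0 with h | h | h
    · rw [indicator_of_notMem (by simp [not_lt.mpr h.le]), hw]
      simp [gammaPDFReal, if_neg (not_le.mpr h)]
    · exact absurd h hy
    · rw [indicator_of_mem (mem_Ioi.mpr h)]
  exact ((integrable_indicator_iff measurableSet_Ioi).mpr hIoi).congr hae

lemma lemE (n m k : ℕ) (hn : 0 < n) (hm : 0 < m) {s t : ℝ} (hs : 0 < s) (ht : 0 < t) :
    ∫ z : ℝ × ℝ, ({z : ℝ × ℝ | z.1 ≤ z.2}.indicator (fun z => z.2 ^ k)) z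
        ∂((gammaMeasure n s).prod (gammaMeasure m t))
      = Real.Gamma (m + k) / (t ^ k * Real.Gamma m) * regIncBeta n (m + k) (s / (s + t)) := by
  have hn' : (0:ℝ) < n := by exact_mod_cast hn
  have hm' : (0:ℝ) < m := by exact_mod_cast hm
  set μ := gammaMeasure (n:ℝ) s with hμdef
  set ν := gammaMeasure (m:ℝ) t with hνdef
  have hμ : IsProbabilityMeasure μ := isProbabilityMeasure_gammaMeasure hn' hs
  have hν : IsProbabilityMeasure ν := isProbabilityMeasure_gammaMeasure hm' ht
  set F : ℝ × ℝ → ℝ := fun z => ({z : ℝ × ℝ | z.1 ≤ z.2}.indicator (fun z => z.2 ^ k)) z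
    with hFdef
  have hFmeas : Measurable F :=
    (measurable_snd.pow_const k).indicator (measurableSet_le measurable_fst measurable_snd)
  have hFint : Integrable F (μ.prod ν) := by
    have h2 : Measure.map Prod.snd (μ.prod ν) = ν := by
      rw [Measure.map_snd_prod, measure_univ, one_smul]
    have h1 : Integrable (fun y : ℝ => |y| ^ k) ν := moment_integrable m k hm ht
    have hg : Integrable ((fun y : ℝ => |y| ^ k) ∘ Prod.snd) (μ.prod ν) :=
      (integrable_map_measure (by rw [h2]; exact h1.aestronglyMeasurable)
        measurable_snd.aemeasurable).mp (by rw [h2]; exact h1)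
    refine hg.mono' hFmeas.aestronglyMeasurable (ae_of_all _ fun z => ?_)
    calc ‖F z‖ ≤ ‖z.2 ^ k‖ := norm_indicator_le_norm_self _ _
      _ = |z.2| ^ k := by rw [Real.norm_eq_abs, abs_pow]
  rw [MeasureTheory.integral_prod_symm F hFint]
  have hin : ∀ y : ℝ, (∫ x, F (x, y) ∂μ) = (μ (Iic y)).toReal * y ^ k := by
    intro y
    have he : (fun x => F (x, y)) = (Iic y).indicator (fun _ => y ^ k) := by
      funext x
      simp [hFdef, indicator_apply, mem_Iic, Set.mem_setOf_eq]
    rw [he, integral_indicator_const _ measurableSet_Iic, smul_eq_mul]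
    rfl
  simp_rw [hin]
  have hν_eq : ν = volume.withDensity
      (fun y => ((Real.toNNReal (gammaPDFReal m t y) : ℝ≥0) : ℝ≥0∞)) := rfl
  rw [hν_eq, integral_withDensity_eq_integral_smul (measurable_gammaPDFReal m t).real_toNNReal _]
  set w : ℝ → ℝ := fun y => gammaPDFReal m t y * ((μ (Iic y)).toReal * y ^ k) with hwdef
  have hsm : (fun y => Real.toNNReal (gammaPDFReal m t y) • ((μ (Iic y)).toReal * y ^ k)) = w := by
    funext y
    rw [NNReal.smul_def, smul_eq_mul, Real.coe_toNNReal _ (gammaPDFReal_nonneg hm' ht y)]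
  rw [hsm]
  have hae : (Ioi (0:ℝ)).indicator w =ᵐ[volume] w := by
    have h0 : ({(0:ℝ)} : Set ℝ)ᶜ ∈ ae volume := compl_mem_ae_iff.mpr (measure_singleton 0)
    filter_upwards [h0] with y hy
    rcases lt_trichotomy y 0 with h | h | h
    · rw [indicator_of_notMem (by simp [not_lt.mpr h.le]), hwdef]
      simp [gammaPDFReal, if_neg (not_le.mpr h)]
    · exact absurd h hy
    · rw [indicator_of_mem (mem_Ioi.mpr h)]
  rw [← integral_congr_ae hae, MeasureTheory.integral_indicator measurableSet_Ioi]
  have hcong : ∀ y ∈ Ioi (0:ℝ), w y = (t ^ m / Real.Gamma m * (s ^ n / Real.Gamma n)) *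
      ((y ^ (m + k - 1) * Real.exp (-(t*y))) *
        ∫ x in (0:ℝ)..y, x ^ (n-1) * Real.exp (-(s*x))) := by
    intro y hy
    have hy0 : (0:ℝ) < y := hy
    rw [hwdef]
    simp only
    rw [pdf_eq m hm hy0.le, hμdef, cdf_eq n hn hs hy0.le]
    rw [show t ^ m / Real.Gamma m * (y ^ (m-1) * Real.exp (-(t*y))) *
        (s ^ n / Real.Gamma n * (∫ x in (0:ℝ)..y, x ^ (n-1) * Real.exp (-(s*x))) * y ^ k)
      = (t ^ m / Real.Gamma m * (s ^ n / Real.Gamma n)) *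
        (((y ^ (m-1) * y ^ k) * Real.exp (-(t*y))) *
          ∫ x in (0:ℝ)..y, x ^ (n-1) * Real.exp (-(s*x))) by ring]
    rw [show y ^ (m-1) * y ^ k = y ^ (m + k - 1) by rw [← pow_add]; congr 1; omega]
  rw [setIntegral_congr_fun measurableSet_Ioi hcong, MeasureTheory.integral_const_mul]
  rw [lemD n (m + k) hn (by omega) hs ht]
  rw [regIncBeta]
  have hΓn : Real.Gamma n ≠ 0 := (Real.Gamma_pos_of_pos hn').ne'
  have hΓm : Real.Gamma m ≠ 0 := (Real.Gamma_pos_of_pos hm').ne'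
  have hΓmk : Real.Gamma ((m:ℝ) + (k:ℝ)) ≠ 0 := (Real.Gamma_pos_of_pos (by positivity)).ne'
  push_cast
  rw [pow_add t m k]
  field_simp


end auxGamma

/-- If `X ~ Gamma(n, s)` and `Y ~ Gamma(m, t)` are independent, then for every `k : ℕ`,
`E[Y^k ⬝ 1_{X ≤ Y}] = (Γ(m+k)/(t^k Γ(m))) ⬝ I_p(n, m+k)` with `p = s/(s+t)`;
consequently the `k`-th moment of `Y` conditional on `{X ≤ Y}` is
`(Γ(m+k)/(t^k Γ(m))) ⬝ I_p(n, m+k)/I_p(n, m)`. -/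
theorem momentY_on_le_event_eq
    {Ω : Type*} {mΩ : MeasurableSpace Ω} (P : Measure Ω) [IsProbabilityMeasure P]
    (n m : ℕ) (hn : 0 < n) (hm : 0 < m) (s t : ℝ) (hs : 0 < s) (ht : 0 < t)
    (X Y : Ω → ℝ)
    (hX : Measure.map X P = gammaMeasure n s)
    (hY : Measure.map Y P = gammaMeasure m t)
    (hXY : IndepFun X Y P) (k : ℕ) :
    (∫ ω in {ω | X ω ≤ Y ω}, Y ω ^ k ∂P =
        Real.Gamma (m + k) / (t ^ k * Real.Gamma m) *
          regIncBeta n (m + k) (s / (s + t))) ∧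
      (∫ ω in {ω | X ω ≤ Y ω}, Y ω ^ k ∂P) / (P {ω | X ω ≤ Y ω}).toReal =
        Real.Gamma (m + k) / (t ^ k * Real.Gamma m) *
          (regIncBeta n (m + k) (s / (s + t)) / regIncBeta n m (s / (s + t))) := by

  have hn' : (0:ℝ) < n := by exact_mod_cast hn
  have hm' : (0:ℝ) < m := by exact_mod_cast hm
  have hXm : AEMeasurable X P := aemeasurable_of_map_neZero (by
    rw [hX]
    haveI := isProbabilityMeasure_gammaMeasure hn' hs
    infer_instance)
  have hYm : AEMeasurable Y P := aemeasurable_of_map_neZero (by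
    rw [hY]
    haveI := isProbabilityMeasure_gammaMeasure hm' ht
    infer_instance)
  set X' := hXm.mk X with hX'def
  set Y' := hYm.mk Y with hY'def
  have hXX' : X =ᵐ[P] X' := hXm.ae_eq_mk
  have hYY' : Y =ᵐ[P] Y' := hYm.ae_eq_mk
  have hX'meas : Measurable X' := hXm.measurable_mk
  have hY'meas : Measurable Y' := hYm.measurable_mk
  have joint : Measure.map (fun ω => (X' ω, Y' ω)) P
      = (gammaMeasure n s).prod (gammaMeasure m t) := by
    have j2 : Measure.map (fun ω => (X' ω, Y' ω)) P = Measure.map (fun ω => (X ω, Y ω)) P :=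
      Measure.map_congr (by
        filter_upwards [hXX', hYY'] with ω h1 h2
        rw [← h1, ← h2])
    rw [j2, ← hX, ← hY]
    exact (ProbabilityTheory.indepFun_iff_map_prod_eq_prod_map_map hXm hYm).mp hXY
  have key : ∀ j : ℕ, ∫ ω in {ω | X ω ≤ Y ω}, Y ω ^ j ∂P =
      Real.Gamma (m + j) / (t ^ j * Real.Gamma m) * regIncBeta n (m + j) (s / (s + t)) := by
    intro j
    have hS : {ω | X ω ≤ Y ω} =ᵐ[P] {ω | X' ω ≤ Y' ω} := by
      apply Filter.eventuallyEq_set.mpr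
      filter_upwards [hXX', hYY'] with ω h1 h2
      simp only [Set.mem_setOf_eq, h1, h2]
    have hS'meas : MeasurableSet {ω | X' ω ≤ Y' ω} := measurableSet_le hX'meas hY'meas
    rw [setIntegral_congr_set hS]
    rw [integral_congr_ae (ae_restrict_of_ae (hYY'.mono fun ω h => by rw [h]))]
    rw [← MeasureTheory.integral_indicator hS'meas]
    have hrepr : (fun ω => ({ω | X' ω ≤ Y' ω}.indicator (fun ω => Y' ω ^ j)) ω)
        = fun ω => ({z : ℝ × ℝ | z.1 ≤ z.2}.indicator (fun z => z.2 ^ j)) (X' ω, Y' ω) := by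
      funext ω
      simp [Set.indicator_apply, Set.mem_setOf_eq]
    rw [hrepr]
    have hFmeas : Measurable (fun z : ℝ × ℝ => ({z : ℝ × ℝ | z.1 ≤ z.2}.indicator
        (fun z => z.2 ^ j)) z) :=
      (measurable_snd.pow_const j).indicator (measurableSet_le measurable_fst measurable_snd)
    rw [← MeasureTheory.integral_map ((hX'meas.prodMk hY'meas).aemeasurable)
      hFmeas.aestronglyMeasurable, joint]
    exact lemE n m j hn hm hs ht
  refine ⟨key k, ?_⟩
  have hP0 : (P {ω | X ω ≤ Y ω}).toReal = regIncBeta n m (s / (s + t)) := by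
    have h1 := key 0
    have hΓm : Real.Gamma m ≠ 0 := (Real.Gamma_pos_of_pos hm').ne'
    simp only [pow_zero, Nat.cast_zero, add_zero, Nat.add_zero, one_mul,
      div_self hΓm, one_mul] at h1
    rw [setIntegral_const, smul_eq_mul, mul_one] at h1
    exact h1
  rw [key k, hP0, mul_div_assoc]
end

section
/- Let n and m be positive integers and s, t > 0. Let X and Y be independent real random variables with the inverse-gamma distributions iG(n, s) and iG(m, t), respectively. Then Pr[X ≥ Y] = I_p(n, m), where p = s/(s+t) and I_p(n, m) is the regularized incomplete beta function. -/
open MeasureTheory ProbabilityTheory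

noncomputable def invGammaPDFReal (n : ℕ) (s x : ℝ) : ℝ :=
  if 0 < x then s ^ n / Real.Gamma n * x ^ (-(n : ℤ) - 1) * Real.exp (-(s / x)) else 0

noncomputable def invGammaMeasure (n : ℕ) (s : ℝ) : Measure ℝ :=
  volume.withDensity fun x => ENNReal.ofReal (invGammaPDFReal n s x)

open scoped ENNReal NNReal
open Real Set

lemma zpow_aux (n : ℕ) (x : ℝ) : x ^ (-(n : ℤ) - 1) = (x ^ (n + 1))⁻¹ := by
  rw [show -(n:ℤ) - 1 = -((n:ℤ)+1) by ring, zpow_neg, ← zpow_natCast x (n+1)]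
  push_cast
  ring_nf

lemma measurable_invGammaPDFReal (n : ℕ) (s : ℝ) : Measurable (invGammaPDFReal n s) := by
  unfold invGammaPDFReal
  simp_rw [zpow_aux]
  refine Measurable.ite measurableSet_Ioi ?_ measurable_const
  exact ((measurable_const.mul ((measurable_id.pow_const (n+1)).inv)).mul
    ((measurable_const.div measurable_id).neg.exp))

lemma invGammaPDFReal_nonneg (n : ℕ) (s : ℝ) (hs : 0 < s) (x : ℝ) :
    0 ≤ invGammaPDFReal n s x := by
  unfold invGammaPDFReal
  split_ifs with h
  · have hx : (0:ℝ) < x ^ (-(n : ℤ) - 1) := zpow_pos h _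
    positivity
  · exact le_refl 0

lemma ae_ne_zero : ∀ᵐ (x:ℝ) ∂volume, x ≠ 0 := by
  rw [ae_iff]
  simpa using Real.volume_singleton (x := 0)

lemma setLIntegral_eq_inter_Ioi {f : ℝ → ℝ≥0∞}
    (hf0 : ∀ᵐ x ∂(volume : Measure ℝ), x ∉ Ioi (0:ℝ) → f x = 0) {B : Set ℝ}
    (hB : MeasurableSet B) : ∫⁻ x in B, f x = ∫⁻ x in B ∩ Ioi 0, f x := by
  rw [← lintegral_inter_add_diff f B measurableSet_Ioi]
  have h2 : ∫⁻ x in B \ Ioi 0, f x = 0 := by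
    rw [← lintegral_zero (μ := volume.restrict (B \ Ioi 0))]
    refine lintegral_congr_ae ?_
    filter_upwards [ae_restrict_mem (hB.diff measurableSet_Ioi), ae_restrict_of_ae hf0]
      with x hx h0
    exact h0 hx.2
  rw [h2, add_zero]

lemma gammaPDF_ae_zero (a r : ℝ) :
    ∀ᵐ x ∂(volume : Measure ℝ), x ∉ Ioi (0:ℝ) → gammaPDF a r x = 0 := by
  filter_upwards [ae_ne_zero] with x hx h
  have : x < 0 := lt_of_le_of_ne (not_lt.mp h) hx
  exact gammaPDF_of_neg this

lemma invGammaPDF_zero {n : ℕ} {s x : ℝ} (h : x ∉ Ioi (0:ℝ)) :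
    ENNReal.ofReal (invGammaPDFReal n s x) = 0 := by
  have h2 : ¬ 0 < x := by simpa using h
  rw [invGammaPDFReal, if_neg h2, ENNReal.ofReal_zero]

lemma invGammaMeasure_eq_map (n : ℕ) (hn : 0 < n) (s : ℝ) (hs : 0 < s) :
    invGammaMeasure n s = (gammaMeasure n s).map (fun x => x⁻¹) := by
  obtain ⟨k, rfl⟩ : ∃ k, n = k + 1 := ⟨n - 1, by omega⟩
  set n := k + 1
  ext A hA
  rw [Measure.map_apply measurable_inv hA, gammaMeasure,
    withDensity_apply _ (measurable_inv hA), invGammaMeasure, withDensity_apply _ hA,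
    setLIntegral_eq_inter_Ioi (gammaPDF_ae_zero _ _) (measurable_inv hA),
    setLIntegral_eq_inter_Ioi (f := fun x => ENNReal.ofReal (invGammaPDFReal n s x))
      (ae_of_all _ fun x hx => invGammaPDF_zero hx) hA]
  have himg : (fun x : ℝ => x⁻¹) ⁻¹' A ∩ Ioi 0 = (fun x : ℝ => x⁻¹) '' (A ∩ Ioi 0) := by
    ext x
    constructor
    · rintro ⟨hxA, hx⟩
      exact ⟨x⁻¹, ⟨hxA, Set.mem_Ioi.mpr (inv_pos.mpr hx)⟩, by simp⟩
    · rintro ⟨y, ⟨hyA, hy⟩, rfl⟩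
      exact ⟨by simpa using hyA, Set.mem_Ioi.mpr (inv_pos.mpr hy)⟩
  rw [himg]
  rw [MeasureTheory.lintegral_image_eq_lintegral_abs_det_fderiv_mul volume
    (hA.inter measurableSet_Ioi)
    (f' := fun x => ContinuousLinearMap.smulRight (1 : ℝ →L[ℝ] ℝ) (-(x^2)⁻¹))
    (fun x hx => ((hasDerivAt_inv (ne_of_gt hx.2)).hasDerivWithinAt).hasFDerivWithinAt)
    (Set.InjOn.mono Set.inter_subset_right (fun a ha b hb h => by
      simpa [inv_inv] using congrArg Inv.inv h))
    (gammaPDF n s)]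
  refine setLIntegral_congr_fun (hA.inter measurableSet_Ioi) (fun y hy => ?_)
  have hy0 : (0:ℝ) < y := hy.2
  rw [ContinuousLinearMap.det_smulRight, ContinuousLinearMap.one_apply, one_mul, gammaPDF_of_nonneg (by positivity),
    invGammaPDFReal, if_pos hy0, ← ENNReal.ofReal_mul (by positivity)]
  congr 1
  have hG : Real.Gamma ((n:ℝ)) = Real.Gamma n := rfl
  have h1 : ((n:ℝ) - 1) = ((k:ℕ) : ℝ) := by simp [n]
  rw [h1, Real.rpow_natCast, Real.rpow_natCast, zpow_aux, abs_neg, abs_of_pos (by positivity)]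
  have hyne : y ≠ 0 := ne_of_gt hy0
  field_simp
  have hpn : y ^ n = y ^ k * y := pow_succ y k
  rw [one_div, inv_pow, pow_succ y n, hpn, show y ^ k * y * y = y * y * y ^ k by ring,
    mul_inv_cancel_right₀ (pow_ne_zero _ hyne), sq]

lemma gamma_Iic (n : ℕ) (hn : 0 < n) (s : ℝ) (hs : 0 < s) {y : ℝ} (hy : 0 < y) :
    (gammaMeasure n s) (Iic y) =
      ENNReal.ofReal (s ^ n * y ^ n / Real.Gamma n *
        ∫ w in (0:ℝ)..1, w ^ (n-1) * Real.exp (-(s*y*w))) := by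
  obtain ⟨k, rfl⟩ : ∃ k, n = k + 1 := ⟨n - 1, by omega⟩
  set n := k + 1 with hnk
  set g : ℝ → ℝ := fun x => s ^ n / Real.Gamma n * x ^ k * Real.exp (-(s*x)) with hg
  have hgc : Continuous g := by
    continuity
  rw [gammaMeasure, withDensity_apply _ measurableSet_Iic,
    setLIntegral_eq_inter_Ioi (gammaPDF_ae_zero _ _) measurableSet_Iic,
    Set.inter_comm, Set.Ioi_inter_Iic]
  have hcong : ∀ x ∈ Ioc (0:ℝ) y, gammaPDF n s x = ENNReal.ofReal (g x) := by
    intro x hx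
    rw [gammaPDF_of_nonneg hx.1.le, hg]
    congr 1
    rw [show ((n:ℝ) - 1) = ((k:ℕ):ℝ) by simp [hnk], Real.rpow_natCast, Real.rpow_natCast]
  rw [setLIntegral_congr_fun measurableSet_Ioc hcong,
    ← MeasureTheory.ofReal_integral_eq_lintegral_ofReal
      (hgc.integrableOn_Ioc)
      ((ae_restrict_mem measurableSet_Ioc).mono fun x hx => by
        have := hx.1.le
        positivity)]
  congr 1
  have h2 := intervalIntegral.smul_integral_comp_mul_left (a := 0) (b := 1) g y
  simp only [mul_zero, mul_one] at h2
  rw [← intervalIntegral.integral_of_le hy.le, ← h2, smul_eq_mul]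
  have : ∀ w : ℝ, g (y * w) = (s ^ n / Real.Gamma n * y ^ k) * (w ^ k * Real.exp (-(s*y*w))) := by
    intro w
    simp only [hg]
    rw [mul_pow]
    ring
  rw [intervalIntegral.integral_congr (g := fun w =>
      (s ^ n / Real.Gamma n * y ^ k) * (w ^ k * Real.exp (-(s*y*w)))) (fun w _ => this w),
    intervalIntegral.integral_const_mul]
  have hk : n - 1 = k := by omega
  rw [hk]
  ring

lemma lintegral_pow_exp (N : ℕ) (hN : 0 < N) (c : ℝ) (hc : 0 < c) :
    ∫⁻ y in Ioi (0:ℝ), ENNReal.ofReal (y ^ (N-1) * Real.exp (-(c*y))) =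
      ENNReal.ofReal (Real.Gamma N / c ^ N) := by
  obtain ⟨k, rfl⟩ : ∃ k, N = k + 1 := ⟨N - 1, by omega⟩
  set N := k + 1 with hNk
  have hcast : ((N:ℝ) - 1) = ((k:ℕ):ℝ) := by simp [hNk]
  have heq : ∀ y ∈ Ioi (0:ℝ), y ^ (N-1) * Real.exp (-(c*y)) =
      y ^ ((N:ℝ) - 1) * Real.exp (-(c * y)) := by
    intro y hy
    rw [hcast, Real.rpow_natCast]
    simp [hNk]
  have hint : IntegrableOn (fun y : ℝ => y ^ (N-1) * Real.exp (-(c*y))) (Ioi 0) := by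
    have h := integrableOn_rpow_mul_exp_neg_mul_rpow (s := (k:ℝ)) (p := 1)
      (lt_of_lt_of_le (by norm_num) (Nat.cast_nonneg k)) one_pos hc
    refine (h.congr_fun ?_ measurableSet_Ioi)
    intro y hy
    simp only [Real.rpow_one, Real.rpow_natCast, neg_mul, hNk, Nat.add_sub_cancel]
  rw [← MeasureTheory.ofReal_integral_eq_lintegral_ofReal hint
    ((ae_restrict_mem measurableSet_Ioi).mono fun y hy => by
      have : (0:ℝ) < y := hy
      positivity)]
  congr 1
  rw [setIntegral_congr_fun measurableSet_Ioi heq,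
    integral_rpow_mul_exp_neg_mul_Ioi (by positivity) hc,
    Real.rpow_natCast]
  rw [div_pow, one_pow, one_div, mul_comm, div_eq_mul_inv]

lemma beta_subst (k l : ℕ) {s t : ℝ} (hs : 0 < s) (ht : 0 < t) :
    ∫ u in (0:ℝ)..(s/(s+t)), u ^ k * (1-u) ^ l =
      s ^ (k+1) * t ^ (l+1) * ∫ w in (0:ℝ)..1, w ^ k / (s*w+t) ^ (k+l+2) := by
  have hne : ∀ w ∈ Set.uIcc (0:ℝ) 1, s*w+t ≠ 0 := by
    intro w hw
    rw [Set.uIcc_of_le (by norm_num)] at hw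
    have h0 : 0 ≤ w := hw.1
    positivity
  set φ : ℝ → ℝ := fun w => s*w/(s*w+t) with hφ
  set ψ : ℝ → ℝ := fun w => s*t/(s*w+t)^2 with hψ
  have hderiv : ∀ w ∈ Set.uIcc (0:ℝ) 1, HasDerivAt φ (ψ w) w := by
    intro w hw
    have h1 : HasDerivAt (fun w : ℝ => s*w) s w := by simpa using (hasDerivAt_id w).const_mul s
    have h2 : HasDerivAt (fun w : ℝ => s*w+t) s w := h1.add_const t
    have h3 := h1.div h2 (hne w hw)
    refine h3.congr_deriv ?_
    show _ = s*t/(s*w+t)^2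
    congr 1
    ring
  have hcont : ContinuousOn ψ (Set.uIcc (0:ℝ) 1) := by
    apply ContinuousOn.div continuousOn_const
    · exact ((continuous_const.mul continuous_id).add continuous_const).pow 2 |>.continuousOn
    · exact fun w hw => pow_ne_zero 2 (hne w hw)
  have hg : Continuous (fun u : ℝ => u ^ k * (1-u) ^ l) := by continuity
  have key := intervalIntegral.integral_comp_smul_deriv hderiv hcont hg
  have hφ0 : φ 0 = 0 := by simp [hφ]
  have hφ1 : φ 1 = s/(s+t) := by simp [hφ]
  rw [hφ0, hφ1] at key
  rw [← key, ← intervalIntegral.integral_const_mul]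
  apply intervalIntegral.integral_congr
  intro w hw
  rw [Set.uIcc_of_le (by norm_num)] at hw
  have h0 : 0 ≤ w := hw.1
  have hpos : 0 < s*w+t := by positivity
  simp only [hφ, hψ, smul_eq_mul, Function.comp]
  have h1mφ : 1 - s*w/(s*w+t) = t/(s*w+t) := by field_simp; ring
  rw [h1mφ, div_pow, div_pow, mul_pow]
  field_simp
  ring

lemma gamma_Iic_zero (n : ℕ) (s : ℝ) : (gammaMeasure n s) (Iic 0) = 0 := by
  rw [gammaMeasure, withDensity_apply _ measurableSet_Iic,
    setLIntegral_eq_inter_Ioi (gammaPDF_ae_zero _ _) measurableSet_Iic]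
  rw [Set.Iic_inter_Ioi, Set.Ioc_self]
  simp

lemma gamma_prod_le (n m : ℕ) (hn : 0 < n) (hm : 0 < m) (s t : ℝ) (hs : 0 < s) (ht : 0 < t) :
    ((gammaMeasure (n:ℝ) s).prod (gammaMeasure (m:ℝ) t)) {q : ℝ × ℝ | q.1 ≤ q.2} =
      ENNReal.ofReal (regIncBeta n m (s / (s + t))) := by
  obtain ⟨a, rfl⟩ : ∃ a, n = a + 1 := ⟨n - 1, by omega⟩
  obtain ⟨b, rfl⟩ : ∃ b, m = b + 1 := ⟨m - 1, by omega⟩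
  set n := a + 1 with hna
  set m := b + 1 with hmb
  haveI : IsProbabilityMeasure (gammaMeasure (n:ℝ) s) :=
    isProbabilityMeasure_gammaMeasure (by positivity) hs
  haveI : IsProbabilityMeasure (gammaMeasure (m:ℝ) t) :=
    isProbabilityMeasure_gammaMeasure (by positivity) ht
  have hpdfmeas : Measurable (gammaPDF (m:ℝ) t) := (measurable_gammaPDFReal _ _).ennreal_ofReal
  set K : ℝ := s ^ n * t ^ m / (Real.Gamma n * Real.Gamma m) with hK
  have hGn : 0 < Real.Gamma (n:ℝ) := Real.Gamma_pos_of_pos (by positivity)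
  have hGm : 0 < Real.Gamma (m:ℝ) := Real.Gamma_pos_of_pos (by positivity)
  have hKpos : 0 < K := by rw [hK]; positivity
  set H : ℝ → ℝ → ℝ := fun y w =>
    K * y ^ (n + m - 1) * (w ^ (n - 1) * Real.exp (-((s*w+t)*y))) with hH
  have hmono : Measurable fun y : ℝ => (gammaMeasure (n:ℝ) s) (Iic y) :=
    Monotone.measurable (fun y₁ y₂ h => measure_mono (Set.Iic_subset_Iic.mpr h))
  -- step 6: express as a single lintegral over Ioi 0
  rw [Measure.prod_apply_symm (measurableSet_le measurable_fst measurable_snd)]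
  have hpre : ∀ y : ℝ, (fun x => (x, y)) ⁻¹' {q : ℝ × ℝ | q.1 ≤ q.2} = Iic y := fun y => rfl
  simp_rw [hpre]
  rw [show (gammaMeasure (m:ℝ) t) = volume.withDensity (gammaPDF m t) from rfl,
    lintegral_withDensity_eq_lintegral_mul _ hpdfmeas hmono]
  rw [← setLIntegral_univ, setLIntegral_eq_inter_Ioi (f := fun y =>
      (gammaPDF (m:ℝ) t * fun y => (gammaMeasure (n:ℝ) s) (Iic y)) y)
      (by filter_upwards [gammaPDF_ae_zero (m:ℝ) t] with y hy h
          simp [hy h]) MeasurableSet.univ, Set.univ_inter]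
  -- step 7: rewrite the integrand for y > 0 as an inner lintegral in w
  have step7 : ∀ y ∈ Ioi (0:ℝ),
      (gammaPDF (m:ℝ) t * fun y => (gammaMeasure (n:ℝ) s) (Iic y)) y =
        ∫⁻ w in Ioc (0:ℝ) 1, ENNReal.ofReal (H y w) := by
    intro y hy
    have hy0 : (0:ℝ) < y := hy
    have hexp : ∀ w : ℝ, Real.exp (-((s*w+t)*y)) =
        Real.exp (-(t*y)) * Real.exp (-(s*y*w)) := by
      intro w; rw [← Real.exp_add]; congr 1; ring
    have hpdf : gammaPDF (m:ℝ) t y =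
        ENNReal.ofReal (t ^ m / Real.Gamma m * y ^ b * Real.exp (-(t*y))) := by
      rw [gammaPDF_of_nonneg hy0.le]
      congr 1
      rw [show ((m:ℝ)-1) = ((b:ℕ):ℝ) by simp [hmb], Real.rpow_natCast, Real.rpow_natCast]
    have hHcw : Continuous (H y) := by
      apply Continuous.mul continuous_const
      exact (continuous_pow _).mul
        ((((continuous_const.mul continuous_id).add continuous_const).mul
          continuous_const).neg.rexp)
    have hint : IntegrableOn (H y) (Ioc 0 1) := hHcw.integrableOn_Ioc
    have hnn : 0 ≤ᵐ[volume.restrict (Ioc (0:ℝ) 1)] (H y) := by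
      filter_upwards [ae_restrict_mem measurableSet_Ioc] with w hw
      have hw0 : (0:ℝ) < w := hw.1
      rw [hH]
      positivity
    rw [Pi.mul_apply, hpdf, gamma_Iic n hn s hs hy0,
      ← ENNReal.ofReal_mul (by positivity),
      ← MeasureTheory.ofReal_integral_eq_lintegral_ofReal hint hnn]
    congr 1
    rw [← intervalIntegral.integral_of_le (by norm_num : (0:ℝ) ≤ 1)]
    have hHw : ∀ w : ℝ, H y w = (K * y ^ (n+m-1) * Real.exp (-(t*y))) *
        (w ^ (n-1) * Real.exp (-(s*y*w))) := by
      intro w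
      simp only [hH]
      rw [hexp w]
      ring
    rw [intervalIntegral.integral_congr (g := fun w => (K * y ^ (n+m-1) * Real.exp (-(t*y))) *
        (w ^ (n-1) * Real.exp (-(s*y*w)))) (fun w _ => hHw w),
      intervalIntegral.integral_const_mul, hK]
    have h1 : n + m - 1 = a + b + 1 := by omega
    rw [h1]
    have hb' : n - 1 = a := by omega
    rw [hb']
    field_simp
    ring
  rw [setLIntegral_congr_fun measurableSet_Ioi step7]
  -- step 8: swap the order of integration
  have hHunc : Continuous fun q : ℝ × ℝ => H q.1 q.2 := by
    apply Continuous.mul (continuous_const.mul (continuous_fst.pow _))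
    exact (continuous_snd.pow _).mul
      ((((continuous_const.mul continuous_snd).add continuous_const).mul
        continuous_fst).neg.rexp)
  have hswapmeas : AEMeasurable (Function.uncurry fun y w => ENNReal.ofReal (H y w))
      ((volume.restrict (Ioi (0:ℝ))).prod (volume.restrict (Ioc (0:ℝ) 1))) :=
    (Continuous.measurable (by exact ENNReal.continuous_ofReal.comp hHunc)).aemeasurable
  rw [lintegral_lintegral_swap hswapmeas]
  -- step 9: evaluate the inner integral via the Gamma integral
  have step9 : ∀ w ∈ Ioc (0:ℝ) 1, ∫⁻ y in Ioi (0:ℝ), ENNReal.ofReal (H y w) =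
      ENNReal.ofReal (K * Real.Gamma (↑(n+m)) * (w ^ (n-1) / (s*w+t) ^ (n+m))) := by
    intro w hw
    have hw1 : (0:ℝ) < w := hw.1
    have hc : (0:ℝ) < s*w+t := by positivity
    have hKw : (0:ℝ) ≤ K * w ^ (n-1) := by positivity
    have h1 : ∀ y : ℝ, H y w = (K * w ^ (n-1)) *
        (y ^ (n+m-1) * Real.exp (-((s*w+t)*y))) := by
      intro y; simp only [hH]; ring
    simp_rw [h1, ENNReal.ofReal_mul hKw]
    rw [lintegral_const_mul' _ _ ENNReal.ofReal_ne_top,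
      lintegral_pow_exp (n+m) (by omega) _ hc, ← ENNReal.ofReal_mul hKw]
    congr 1
    ring
  rw [setLIntegral_congr_fun measurableSet_Ioc step9]
  -- step 10: back to a real integral
  set G : ℝ → ℝ := fun w => K * Real.Gamma (↑(n+m)) * (w ^ (n-1) / (s*w+t) ^ (n+m))
    with hG
  have hGcont : ContinuousOn G (Icc (0:ℝ) 1) := by
    apply ContinuousOn.mul continuousOn_const
    apply ContinuousOn.div (continuousOn_pow _)
      (((continuousOn_const.mul continuousOn_id).add continuousOn_const).pow _)
    intro w hw
    have hw0 : (0:ℝ) ≤ w := hw.1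
    have hpw : 0 < s*w+t := by positivity
    exact pow_ne_zero _ hpw.ne'
  have hint : IntegrableOn G (Ioc 0 1) :=
    (hGcont.integrableOn_Icc).mono_set Set.Ioc_subset_Icc_self
  have hnn : 0 ≤ᵐ[volume.restrict (Ioc (0:ℝ) 1)] G := by
    filter_upwards [ae_restrict_mem measurableSet_Ioc] with w hw
    have hw0 : (0:ℝ) < w := hw.1
    rw [hG]
    positivity
  rw [← MeasureTheory.ofReal_integral_eq_lintegral_ofReal hint hnn]
  congr 1
  -- step 11: the remaining real identity, via the beta substitution
  rw [← intervalIntegral.integral_of_le (by norm_num : (0:ℝ) ≤ 1)]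
  simp only [hG, hK, show n - 1 = a from by omega, show n + m = a + b + 2 from by omega]
  rw [intervalIntegral.integral_const_mul]
  rw [regIncBeta, show n - 1 = a from by omega, show m - 1 = b from by omega,
    beta_subst a b hs ht]
  push_cast
  field_simp
  ring_nf
  rw [show ((n:ℝ) + m) = 2 + a + b by rw [hna, hmb]; push_cast; ring, hna, hmb]
  ring

/-- If `X ~ iG(n, s)` and `Y ~ iG(m, t)` are independent inverse-gamma random
variables, then `Pr[X ≥ Y] = I_p(n, m)` with `p = s/(s+t)`. -/
theorem prob_ge_eq_regIncBeta_invGamma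
    {Ω : Type*} {mΩ : MeasurableSpace Ω} (P : Measure Ω) [IsProbabilityMeasure P]
    (n m : ℕ) (hn : 0 < n) (hm : 0 < m) (s t : ℝ) (hs : 0 < s) (ht : 0 < t)
    (X Y : Ω → ℝ)
    (hX : Measure.map X P = invGammaMeasure n s)
    (hY : Measure.map Y P = invGammaMeasure m t)
    (hXY : IndepFun X Y P) :
    (P {ω | X ω ≥ Y ω}).toReal = regIncBeta n m (s / (s + t)) := by
  haveI hPγ₁ : IsProbabilityMeasure (gammaMeasure n s) :=
    isProbabilityMeasure_gammaMeasure (by positivity) hs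
  haveI hPγ₂ : IsProbabilityMeasure (gammaMeasure m t) :=
    isProbabilityMeasure_gammaMeasure (by positivity) ht
  have hμmap := invGammaMeasure_eq_map n hn s hs
  have hνmap := invGammaMeasure_eq_map m hm t ht
  haveI : IsProbabilityMeasure (invGammaMeasure n s) := by
    rw [hμmap]; exact Measure.isProbabilityMeasure_map measurable_inv.aemeasurable
  have hXm : AEMeasurable X P := by
    by_contra h
    rw [Measure.map_of_not_aemeasurable h] at hX
    have h0 : (0 : Measure ℝ) Set.univ = (invGammaMeasure n s) Set.univ := by rw [hX]
    simp [measure_univ] at h0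
  haveI : IsProbabilityMeasure (invGammaMeasure m t) := by
    rw [hνmap]; exact Measure.isProbabilityMeasure_map measurable_inv.aemeasurable
  have hYm : AEMeasurable Y P := by
    by_contra h
    rw [Measure.map_of_not_aemeasurable h] at hY
    have h0 : (0 : Measure ℝ) Set.univ = (invGammaMeasure m t) Set.univ := by rw [hY]
    simp [measure_univ] at h0
  set S : Set (ℝ × ℝ) := {q | q.2 ≤ q.1} with hSdef
  have hS : MeasurableSet S := measurableSet_le measurable_snd measurable_fst
  have step1 : P {ω | X ω ≥ Y ω} = (P.map fun ω => (X ω, Y ω)) S := by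
    rw [Measure.map_apply_of_aemeasurable (hXm.prodMk hYm) hS]
    rfl
  have step2 : P.map (fun ω => (X ω, Y ω)) =
      (invGammaMeasure n s).prod (invGammaMeasure m t) := by
    rw [(indepFun_iff_map_prod_eq_prod_map_map hXm hYm).mp hXY, hX, hY]
  have step3 : (invGammaMeasure n s).prod (invGammaMeasure m t) =
      ((gammaMeasure n s).prod (gammaMeasure m t)).map
        (Prod.map (fun x : ℝ => x⁻¹) (fun x : ℝ => x⁻¹)) := by
    rw [hμmap, hνmap, Measure.map_prod_map _ _ measurable_inv measurable_inv]
  set prm := (gammaMeasure (n:ℝ) s).prod (gammaMeasure (m:ℝ) t) with hprm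
  have step4 : prm.map (Prod.map (fun x : ℝ => x⁻¹) (fun x : ℝ => x⁻¹)) S =
      prm ((Prod.map (fun x : ℝ => x⁻¹) (fun x : ℝ => x⁻¹)) ⁻¹' S) :=
    Measure.map_apply (measurable_inv.prodMap measurable_inv) hS
  -- the complement of the positive quadrant is null
  have hQc : prm ((Ioi (0:ℝ) ×ˢ Ioi (0:ℝ))ᶜ) = 0 := by
    rw [Set.compl_prod_eq_union]
    refine measure_union_null ?_ ?_
    · rw [hprm]
      rw [Measure.prod_prod]
      simp [compl_Ioi, gamma_Iic_zero]
    · rw [hprm]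
      rw [Measure.prod_prod]
      simp [compl_Ioi, gamma_Iic_zero]
  have step5 : prm ((Prod.map (fun x : ℝ => x⁻¹) (fun x : ℝ => x⁻¹)) ⁻¹' S) =
      prm {q : ℝ × ℝ | q.1 ≤ q.2} := by
    refine measure_congr ?_
    rw [MeasureTheory.ae_eq_set]
    constructor
    · refine measure_mono_null (fun q hq => ?_) hQc
      simp only [Set.mem_diff, Set.mem_preimage, Set.mem_setOf_eq, Set.mem_compl_iff,
        Set.mem_prod, Set.mem_Ioi, Prod.map] at hq ⊢
      intro ⟨h1, h2⟩
      exact hq.2 ((inv_le_inv₀ h2 h1).mp hq.1)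
    · refine measure_mono_null (fun q hq => ?_) hQc
      simp only [Set.mem_diff, Set.mem_preimage, Set.mem_setOf_eq, Set.mem_compl_iff,
        Set.mem_prod, Set.mem_Ioi, Prod.map] at hq ⊢
      intro ⟨h1, h2⟩
      exact hq.2 ((inv_le_inv₀ h2 h1).mpr hq.1)
  rw [step1, step2, step3, step4, step5, hprm, gamma_prod_le n m hn hm s t hs ht,
    ENNReal.toReal_ofReal]
  have hp0 : (0:ℝ) ≤ s / (s + t) := by positivity
  have hp1 : s / (s + t) ≤ 1 := by
    rw [div_le_one (by positivity)]
    linarith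
  apply mul_nonneg
  · apply div_nonneg (Real.Gamma_nonneg_of_nonneg (by positivity))
    exact mul_nonneg (Real.Gamma_nonneg_of_nonneg (by positivity))
      (Real.Gamma_nonneg_of_nonneg (by positivity))
  · refine intervalIntegral.integral_nonneg hp0 (fun u hu => ?_)
    exact mul_nonneg (pow_nonneg hu.1 _) (pow_nonneg (by linarith [hu.2]) _)
end

section
/- For all positive integers n and m, the function p ↦ I_p(n, m) / (p^n (1−p)^m) is strictly increasing on the open interval (0, 1). (Equivalently, I_p(n, m)/(p^n (1−p)^m) = ∑_{k=n}^∞ C(m+k−1, k) p^{k−n}, a power series in p with strictly positive coefficients.) -/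
open MeasureTheory

/-- For positive integers `n, m`, the function `p ↦ I_p(n, m) / (p^n (1-p)^m)` is
strictly increasing on `(0, 1)`. -/
theorem strictMonoOn_regIncBeta_div
    (n m : ℕ) (hn : 0 < n) (hm : 0 < m) :
    StrictMonoOn (fun p : ℝ => regIncBeta n m p / (p ^ n * (1 - p) ^ m))
      (Set.Ioo (0:ℝ) 1) := by
  obtain ⟨a, rfl⟩ : ∃ a, n = a + 1 := ⟨n - 1, (Nat.succ_pred_eq_of_pos hn).symm⟩
  obtain ⟨b, rfl⟩ : ∃ b, m = b + 1 := ⟨m - 1, (Nat.succ_pred_eq_of_pos hm).symm⟩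
  set C : ℝ := Real.Gamma ((a + 1 : ℕ) + (b + 1 : ℕ)) /
      (Real.Gamma (a + 1 : ℕ) * Real.Gamma (b + 1 : ℕ)) with hC
  have hCpos : 0 < C := by
    apply div_pos
    · apply Real.Gamma_pos_of_pos; positivity
    · apply mul_pos <;> · apply Real.Gamma_pos_of_pos; positivity
  set φ : ℝ → ℝ := fun u => u ^ a * (1 - u) ^ b with hφ
  have hφcont : Continuous φ := by fun_prop
  set F : ℝ → ℝ := fun p => ∫ u in (0:ℝ)..p, φ u with hFdef
  have hF : ∀ p : ℝ, HasDerivAt F (φ p) p := fun p =>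
    intervalIntegral.integral_hasDerivAt_right (hφcont.intervalIntegrable _ _)
      (hφcont.stronglyMeasurableAtFilter _ _) hφcont.continuousAt
  set g : ℝ → ℝ := fun p => p ^ (a + 1) * (1 - p) ^ (b + 1) with hgdef
  have hg : ∀ p : ℝ, HasDerivAt g (φ p * ((a + 1) * (1 - p) - (b + 1) * p)) p := by
    intro p
    have h1 : HasDerivAt (fun p : ℝ => p ^ (a + 1)) ((a + 1) * p ^ a) p := by
      simpa using hasDerivAt_pow (a + 1) p
    have h2 : HasDerivAt (fun p : ℝ => (1 - p) ^ (b + 1))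
        (-((b + 1) * (1 - p) ^ b)) p := by
      have := ((hasDerivAt_id p).const_sub 1).fun_pow (b + 1)
      simpa using this
    have := h1.fun_mul h2
    refine this.congr_deriv ?_
    ring
  -- key inequality
  have key : ∀ p ∈ Set.Ioo (0:ℝ) 1,
      ((a + 1 : ℝ) * (1 - p) - (b + 1) * p) * F p < g p := by
    intro p hp
    obtain ⟨hp0, hp1⟩ := hp
    have int1 : IntervalIntegrable (fun u => φ u * ((a + 1) * (1 - u) - (b + 1) * u))
        volume 0 p := by apply Continuous.intervalIntegrable; fun_prop
    have int2 : IntervalIntegrable (fun u => φ u * ((a + 1) * (1 - p) - (b + 1) * p))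
        volume 0 p := by apply Continuous.intervalIntegrable; fun_prop
    have h1 : (∫ u in (0:ℝ)..p, φ u * ((a + 1) * (1 - u) - (b + 1) * u)) = g p := by
      rw [intervalIntegral.integral_eq_sub_of_hasDerivAt (fun u _ => hg u) int1]
      simp [hgdef]
    have h2 : (∫ u in (0:ℝ)..p, φ u * ((a + 1) * (1 - p) - (b + 1) * p))
        = ((a + 1 : ℝ) * (1 - p) - (b + 1) * p) * F p := by
      rw [intervalIntegral.integral_mul_const]
      ring
    have h3 : 0 < ∫ u in (0:ℝ)..p,
        (φ u * ((a + 1) * (1 - u) - (b + 1) * u)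
          - φ u * ((a + 1) * (1 - p) - (b + 1) * p)) := by
      apply intervalIntegral.intervalIntegral_pos_of_pos_on (int1.sub int2)
      · intro u hu
        obtain ⟨hu0, hup⟩ := hu
        have hu1 : u < 1 := hup.trans hp1
        have hφpos : 0 < φ u :=
          mul_pos (pow_pos hu0 a) (pow_pos (by linarith) b)
        have : φ u * ((a + 1) * (1 - u) - (b + 1) * u)
            - φ u * ((a + 1) * (1 - p) - (b + 1) * p)
            = φ u * ((a + b + 2) * (p - u)) := by ring
        rw [this]
        have : (0:ℝ) < (a + b + 2) * (p - u) := by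
          apply mul_pos
          · positivity
          · linarith
        exact mul_pos hφpos this
      · exact hp0
    rw [intervalIntegral.integral_sub int1 int2, h1, h2] at h3
    linarith
  -- main argument via derivative
  have heq : (fun p : ℝ => regIncBeta (a + 1) (b + 1) p
      / (p ^ (a + 1) * (1 - p) ^ (b + 1)))
      = fun p => C * F p / g p := by
    funext p
    simp only [regIncBeta, Nat.add_sub_cancel, hC, hFdef, hgdef, hφ]
  rw [heq]
  apply strictMonoOn_of_deriv_pos (convex_Ioo 0 1)
  · apply ContinuousOn.div
    · exact (continuous_const.mul
        (continuous_iff_continuousAt.mpr fun p => (hF p).continuousAt)).continuousOn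
    · exact (by fun_prop : Continuous g).continuousOn
    · intro p hp
      obtain ⟨hp0, hp1⟩ := hp
      exact (mul_pos (pow_pos hp0 _) (pow_pos (by linarith) _)).ne'
  · rw [interior_Ioo]
    intro p hp
    obtain ⟨hp0, hp1⟩ := hp
    have hgpos : 0 < g p :=
      mul_pos (pow_pos hp0 _) (pow_pos (by linarith) _)
    have hd : HasDerivAt (fun p => C * F p / g p)
        ((C * φ p * g p - C * F p * (φ p * ((a + 1) * (1 - p) - (b + 1) * p)))
          / g p ^ 2) p := ((hF p).const_mul C).div (hg p) hgpos.ne'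
    rw [hd.deriv]
    have hφpos : 0 < φ p :=
      mul_pos (pow_pos hp0 a) (pow_pos (by linarith) b)
    have hnum : 0 < C * φ p * g p
        - C * F p * (φ p * ((a + 1) * (1 - p) - (b + 1) * p)) := by
      have := key p ⟨hp0, hp1⟩
      have h4 : C * φ p * g p - C * F p * (φ p * ((a + 1) * (1 - p) - (b + 1) * p))
          = C * φ p * (g p - ((a + 1 : ℝ) * (1 - p) - (b + 1) * p) * F p) := by ring
      rw [h4]
      apply mul_pos (mul_pos hCpos hφpos)
      linarith
    positivity
end

section
/- For all positive integers n and m and all p ∈ (0, 1), writing q = 1 − p, the following two series representations agree: ∑_{k=n}^∞ (Γ(n) Γ(k+m) / (k! Γ(n+m))) · p^{k−n} = ∑_{k=0}^{m−1} (Γ(m) Γ(n+k) / (k! Γ(n+m))) · q^{k−m}; in particular the infinite series on the left converges, and both sides equal B(n, m) · I_p(n, m) / (p^n q^m). -/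
open MeasureTheory

/-- The coefficient `Γ(m)Γ(n+k)/(k! Γ(n+m))`. -/
noncomputable def bb (n m k : ℕ) : ℝ :=
  Real.Gamma m * Real.Gamma (n + k) / (k.factorial * Real.Gamma (n + m))

/-- `HB n m u = ∑_{k<m} bb n m k · u^n (1-u)^k`, an antiderivative of
`u^(n-1)(1-u)^(m-1)`. -/
noncomputable def HB (n m : ℕ) (u : ℝ) : ℝ :=
  ∑ k ∈ Finset.range m, bb n m k * (u ^ n * (1 - u) ^ k)

lemma Gamma_nat (t : ℕ) : Real.Gamma ((t:ℝ) + 1) = t.factorial := by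
  exact_mod_cast Real.Gamma_nat_eq_factorial t

lemma bb_succ (n m k : ℕ) (hn : 0 < n) :
    ((k : ℝ) + 1) * bb n m (k + 1) = ((n : ℝ) + k) * bb n m k := by
  have hne : (n : ℝ) + k ≠ 0 := by positivity
  have : Real.Gamma ((n : ℝ) + (k + 1 : ℕ)) = ((n : ℝ) + k) * Real.Gamma ((n : ℝ) + k) := by
    push_cast
    rw [← Real.Gamma_add_one hne]
    ring_nf
  simp only [bb, this, Nat.factorial_succ]
  push_cast
  have h1 : (k.factorial : ℝ) ≠ 0 := by positivity
  field_simp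

lemma m_bb_m (n m : ℕ) (hn : 0 < n) (hm : 0 < m) :
    (m : ℝ) * bb n m m = 1 := by
  have hG : Real.Gamma ((n : ℝ) + m) ≠ 0 :=
    ne_of_gt (Real.Gamma_pos_of_pos (by positivity))
  obtain ⟨t, rfl⟩ := Nat.exists_eq_succ_of_ne_zero hm.ne'
  have h0 : Real.Gamma ((t + 1 : ℕ) : ℝ) = t.factorial := by push_cast; exact Gamma_nat t
  have h2 : (((t+1).factorial) : ℝ) = ((t:ℝ)+1) * t.factorial := by
    rw [Nat.factorial_succ]; push_cast; ring
  have h3 : ((t.factorial : ℝ)) ≠ 0 := by positivity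
  simp only [bb, h0, h2]
  push_cast
  field_simp

lemma hasDerivAt_HB (n m : ℕ) (hn : 0 < n) (hm : 0 < m) (u : ℝ) :
    HasDerivAt (HB n m) (u ^ (n - 1) * (1 - u) ^ (m - 1)) u := by
  obtain ⟨a, rfl⟩ := Nat.exists_eq_succ_of_ne_zero hn.ne'
  have hterm : ∀ k ∈ Finset.range m,
      HasDerivAt (fun u : ℝ => bb (a + 1) m k * (u ^ (a + 1) * (1 - u) ^ k))
      ((fun k : ℕ => (k : ℝ) * bb (a + 1) m k * u ^ a * (1 - u) ^ (k - 1)) (k + 1)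
        - (fun k : ℕ => (k : ℝ) * bb (a + 1) m k * u ^ a * (1 - u) ^ (k - 1)) k) u := by
    intro k _
    have h1 : HasDerivAt (fun u : ℝ => u ^ (a + 1)) (((a:ℝ) + 1) * u ^ a) u := by
      simpa using hasDerivAt_pow (a + 1) u
    have h2 : HasDerivAt (fun u : ℝ => (1 - u) ^ k) ((k : ℝ) * (1 - u) ^ (k - 1) * (-1)) u := by
      have := (hasDerivAt_pow k (1 - u)).comp u ((hasDerivAt_id u).const_sub 1)
      exact this
    have h3 := (h1.mul h2).const_mul (bb (a + 1) m k)
    refine h3.congr_deriv (Eq.symm ?_)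
    have hb := bb_succ (a + 1) m k (Nat.succ_pos a)
    push_cast at hb ⊢
    cases k with
    | zero =>
      simp only [Nat.zero_sub, Nat.add_sub_cancel, pow_zero, Nat.cast_zero] at hb ⊢
      push_cast at hb ⊢
      linear_combination (u ^ a) * hb
    | succ s =>
      simp only [Nat.add_sub_cancel, Nat.succ_sub_one] at hb ⊢
      push_cast at hb ⊢
      linear_combination (u ^ a * (1 - u) ^ (s + 1)) * hb
  have hsum := HasDerivAt.fun_sum hterm
  have key : ∑ k ∈ Finset.range m,
      ((fun k : ℕ => (k : ℝ) * bb (a + 1) m k * u ^ a * (1 - u) ^ (k - 1)) (k + 1)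
        - (fun k : ℕ => (k : ℝ) * bb (a + 1) m k * u ^ a * (1 - u) ^ (k - 1)) k)
      = u ^ (a + 1 - 1) * (1 - u) ^ (m - 1) := by
    rw [Finset.sum_range_sub (fun k : ℕ => (k : ℝ) * bb (a + 1) m k * u ^ a * (1 - u) ^ (k - 1)) m]
    simp only [Nat.cast_zero, zero_mul, mul_zero, sub_zero, Nat.add_sub_cancel]
    rw [show (m:ℝ) * bb (a+1) m m * u ^ a * (1-u)^(m-1)
        = ((m:ℝ) * bb (a+1) m m) * (u ^ a * (1-u)^(m-1)) from by ring,
      m_bb_m (a+1) m (Nat.succ_pos a) hm, one_mul]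
  rw [key] at hsum
  exact hsum

lemma HB_zero (n m : ℕ) (hn : 0 < n) : HB n m 0 = 0 := by
  simp [HB, zero_pow hn.ne']

lemma HB_one (n m : ℕ) (hn : 0 < n) :
    HB m n 1 = Real.Gamma n * Real.Gamma m / Real.Gamma ((n : ℝ) + m) := by
  rw [HB, Finset.sum_eq_single 0]
  · simp [bb, add_comm (m:ℝ) (n:ℝ), mul_comm (Real.Gamma (n:ℝ))]
  · intro k _ hk
    simp [zero_pow hk]
  · intro h
    simp at h
    omega

lemma integral_eq_HB (n m : ℕ) (hn : 0 < n) (hm : 0 < m) (x : ℝ) :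
    ∫ u in (0:ℝ)..x, u ^ (n - 1) * (1 - u) ^ (m - 1) = HB n m x := by
  rw [intervalIntegral.integral_eq_sub_of_hasDerivAt
      (fun u _ => hasDerivAt_HB n m hn hm u)
      (by apply Continuous.intervalIntegrable; continuity),
    HB_zero n m hn, sub_zero]

lemma HB_symm (n m : ℕ) (hn : 0 < n) (hm : 0 < m) (x : ℝ) :
    HB n m x = Real.Gamma n * Real.Gamma m / Real.Gamma ((n : ℝ) + m) - HB m n (1 - x) := by
  have hK : ∀ u : ℝ, HasDerivAt
      (fun u : ℝ => Real.Gamma (n:ℝ) * Real.Gamma (m:ℝ) / Real.Gamma ((n : ℝ) + m) - HB m n (1 - u))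
      (u ^ (n - 1) * (1 - u) ^ (m - 1)) u := by
    intro u
    have h1 := (hasDerivAt_HB m n hm hn (1 - u)).comp u ((hasDerivAt_id u).const_sub 1)
    have h2 := h1.const_sub (Real.Gamma (n:ℝ) * Real.Gamma (m:ℝ) / Real.Gamma ((n : ℝ) + m))
    refine h2.congr_deriv (Eq.symm ?_)
    simp
    ring
  have := intervalIntegral.integral_eq_sub_of_hasDerivAt (f := fun u : ℝ =>
      Real.Gamma (n:ℝ) * Real.Gamma (m:ℝ) / Real.Gamma ((n : ℝ) + m) - HB m n (1 - u))
      (a := 0) (b := x) (fun u _ => hK u)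
      (by apply Continuous.intervalIntegrable; continuity)
  rw [integral_eq_HB n m hn hm x] at this
  rw [this]
  rw [show (1:ℝ) - 0 = 1 by norm_num, HB_one n m hn]
  ring

lemma bb_swap_eq_choose (n m : ℕ) (hn : 0 < n) (hm : 0 < m) (i : ℕ) :
    bb m n i = Real.Gamma n * Real.Gamma m / Real.Gamma ((n:ℝ) + m)
      * ((i + (m - 1)).choose (m - 1)) := by
  obtain ⟨t, rfl⟩ := Nat.exists_eq_succ_of_ne_zero hm.ne'
  simp only [Nat.succ_sub_one, bb]
  have h1 : Real.Gamma ((t + 1 : ℕ) : ℝ) = t.factorial := by push_cast; exact Gamma_nat t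
  have h2 : Real.Gamma (((t + 1 : ℕ) : ℝ) + (i : ℝ)) = ((t + i).factorial : ℝ) := by
    push_cast
    rw [show (t : ℝ) + 1 + i = ((t + i : ℕ) : ℝ) + 1 by push_cast; ring, Gamma_nat]
  have h3 : ((i + t).choose t : ℝ) * t.factorial * i.factorial = ((i + t).factorial : ℝ) := by
    have := Nat.choose_mul_factorial_mul_factorial (Nat.le_add_left t i)
    rw [Nat.add_sub_cancel] at this
    exact_mod_cast congrArg (Nat.cast : ℕ → ℝ) this
  have hGnm : Real.Gamma (((t+1:ℕ)) + (n : ℝ)) ≠ 0 :=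
    ne_of_gt (Real.Gamma_pos_of_pos (by push_cast; positivity))
  have hGnm' : Real.Gamma ((n : ℝ) + ((t+1:ℕ))) = Real.Gamma (((t+1:ℕ)) + (n : ℝ)) := by
    rw [add_comm]
  push_cast at h1 h2 h3 hGnm hGnm' ⊢
  rw [h1, h2, hGnm']
  have hfi : (i.factorial : ℝ) ≠ 0 := by positivity
  have hft : (t.factorial : ℝ) ≠ 0 := by positivity
  rw [show ((t+i).factorial : ℝ) = ((i + t).choose t : ℝ) * t.factorial * i.factorial by
    rw [h3, show t + i = i + t from Nat.add_comm t i]]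
  field_simp

/-- For positive integers `n, m` and `p ∈ (0,1)`, with `q = 1 - p`, the infinite series
`∑_{k=n}^∞ (Γ(n)Γ(k+m)/(k! Γ(n+m))) p^{k-n}` (written with `k = n + j`) converges to the
finite sum `∑_{k=0}^{m-1} (Γ(m)Γ(n+k)/(k! Γ(n+m))) q^{k-m}`, and both sides equal
`B(n, m) ⬝ I_p(n, m) / (p^n q^m)`. -/
theorem negBinomial_series_eq_finite_sum
    (n m : ℕ) (hn : 0 < n) (hm : 0 < m) (p : ℝ) (hp : p ∈ Set.Ioo (0:ℝ) 1) :
    HasSum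
      (fun j : ℕ =>
        Real.Gamma n * Real.Gamma ((n + j : ℕ) + m) /
          ((n + j).factorial * Real.Gamma (n + m)) * p ^ j)
      (∑ k ∈ Finset.range m,
        Real.Gamma m * Real.Gamma (n + k) / (k.factorial * Real.Gamma (n + m)) *
          (1 - p) ^ ((k : ℤ) - m)) ∧
    (∑ k ∈ Finset.range m,
        Real.Gamma m * Real.Gamma (n + k) / (k.factorial * Real.Gamma (n + m)) *
          (1 - p) ^ ((k : ℤ) - m)) =
      (Real.Gamma n * Real.Gamma m / Real.Gamma (n + m)) * regIncBeta n m p /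
        (p ^ n * (1 - p) ^ m) := by
  obtain ⟨hp0, hp1⟩ := hp
  have hq0 : (0:ℝ) < 1 - p := by linarith
  have hpn : p ^ n ≠ 0 := by positivity
  have hqm : (1 - p) ^ m ≠ 0 := by positivity
  set B : ℝ := Real.Gamma n * Real.Gamma m / Real.Gamma ((n:ℝ) + m) with hB
  have hBpos : 0 < B := by
    apply div_pos (mul_pos (Real.Gamma_pos_of_pos (by exact_mod_cast hn))
      (Real.Gamma_pos_of_pos (by exact_mod_cast hm)))
      (Real.Gamma_pos_of_pos (by positivity))
  have hHB : HB n m p = p ^ n * ∑ k ∈ Finset.range m, bb n m k * (1 - p) ^ k := by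
    rw [HB, Finset.mul_sum]; exact Finset.sum_congr rfl fun k _ => by ring
  have hF : (∑ k ∈ Finset.range m,
        Real.Gamma m * Real.Gamma (n + k) / (k.factorial * Real.Gamma (n + m)) *
          (1 - p) ^ ((k : ℤ) - m))
      = HB n m p / (p ^ n * (1 - p) ^ m) := by
    rw [hHB]
    rw [show (p ^ n * ∑ k ∈ Finset.range m, bb n m k * (1 - p) ^ k) / (p ^ n * (1 - p) ^ m)
        = (∑ k ∈ Finset.range m, bb n m k * (1 - p) ^ k) / (1 - p) ^ m from by
      field_simp]
    rw [Finset.sum_div]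
    refine Finset.sum_congr rfl fun k _ => ?_
    rw [show ((k:ℤ) - m) = (k:ℤ) - (m:ℤ) from rfl, zpow_sub₀ hq0.ne', zpow_natCast, zpow_natCast]
    rw [bb]
    ring
  constructor
  · -- HasSum part
    have hnorm : ‖p‖ < 1 := by rw [Real.norm_eq_abs, abs_of_pos hp0]; exact hp1
    have h0 := hasSum_choose_mul_geometric_of_norm_lt_one (𝕜 := ℝ) (m - 1) hnorm
    have hm1 : m - 1 + 1 = m := Nat.succ_pred_eq_of_pos hm
    have hg : HasSum (fun i : ℕ => bb m n i * p ^ i) (B / (1 - p) ^ m) := by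
      have h1 := h0.mul_left B
      rw [hm1, mul_one_div] at h1
      convert h1 using 1
      · rfl
      funext i
      rw [bb_swap_eq_choose n m hn hm i, hB]
      ring
    have htail : HasSum (fun j : ℕ => bb m n (j + n) * p ^ (j + n))
        (B / (1 - p) ^ m - ∑ i ∈ Finset.range n, bb m n i * p ^ i) :=
      ((hasSum_nat_add_iff' n).2 hg)
    have hP : ∑ i ∈ Finset.range n, bb m n i * p ^ i = HB m n (1 - p) / (1 - p) ^ m := by
      have : HB m n (1 - p) = (1 - p) ^ m * ∑ i ∈ Finset.range n, bb m n i * p ^ i := by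
        rw [HB, Finset.mul_sum]
        refine Finset.sum_congr rfl fun i _ => ?_
        rw [show (1 - (1 - p)) = p from by ring]
        ring
      rw [this]; field_simp
    have hval : B / (1 - p) ^ m - ∑ i ∈ Finset.range n, bb m n i * p ^ i
        = HB n m p / (1 - p) ^ m := by
      rw [hP, HB_symm n m hn hm p, ← hB]
      field_simp
    rw [hval] at htail
    have hfj : ∀ j : ℕ,
        Real.Gamma n * Real.Gamma ((n + j : ℕ) + m) /
          ((n + j).factorial * Real.Gamma (n + m)) * p ^ j * p ^ n
        = bb m n (j + n) * p ^ (j + n) := by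
      intro j
      rw [bb, show j + n = n + j from Nat.add_comm j n]
      rw [show Real.Gamma ((m:ℝ) + ((n + j :ℕ))) = Real.Gamma (((n + j : ℕ):ℝ) + m) from by
        rw [add_comm]]
      rw [show Real.Gamma ((m:ℝ) + n) = Real.Gamma ((n:ℝ) + m) from by rw [add_comm]]
      rw [pow_add]
      ring
    have hts : HasSum (fun j : ℕ =>
        Real.Gamma n * Real.Gamma ((n + j : ℕ) + m) /
          ((n + j).factorial * Real.Gamma (n + m)) * p ^ j * p ^ n)
        (HB n m p / (1 - p) ^ m) := by
      convert htail using 2 with j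
      exact hfj j
    have h2 := hts.mul_right (p ^ n)⁻¹
    have h3 : HasSum (fun j : ℕ =>
        Real.Gamma n * Real.Gamma ((n + j : ℕ) + m) /
          ((n + j).factorial * Real.Gamma (n + m)) * p ^ j)
        (HB n m p / (1 - p) ^ m * (p ^ n)⁻¹) := by
      convert h2 using 1
      · rfl
      funext j
      rw [mul_assoc, mul_inv_cancel₀ hpn, mul_one]
    rw [hF]
    have h4 : HB n m p / (1 - p) ^ m * (p ^ n)⁻¹ = HB n m p / (p ^ n * (1 - p) ^ m) := by
      rw [← div_eq_mul_inv, div_div, mul_comm ((1 - p) ^ m) (p ^ n)]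
    rw [h4] at h3
    exact h3
  · rw [hF, regIncBeta, integral_eq_HB n m hn hm p, ← mul_assoc]
    have hGn : Real.Gamma (n:ℝ) ≠ 0 := ne_of_gt (Real.Gamma_pos_of_pos (by exact_mod_cast hn))
    have hGm : Real.Gamma (m:ℝ) ≠ 0 := ne_of_gt (Real.Gamma_pos_of_pos (by exact_mod_cast hm))
    have hGnm : Real.Gamma ((n:ℝ) + m) ≠ 0 := ne_of_gt (Real.Gamma_pos_of_pos (by positivity))
    rw [show B * (Real.Gamma ((n:ℝ) + m) / (Real.Gamma n * Real.Gamma m)) = 1 from by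
      rw [hB]; field_simp]
    rw [one_mul]
end

section
/- Let Y ∈ ℂ^{D×M}, let V ∈ ℂ^{D×K} satisfy V*V = D·I_K, and let σ > 0. Define A₀ = V*Y/D and H₀ = Y − V A₀. Then, with respect to Lebesgue measure on ℂ^{K×M} ≅ ℝ^{2KM}: (i) ∫_{ℂ^{K×M}} exp(−‖Y − V A‖²/σ²) dA = (π σ²/D)^{KM} · exp(−‖H₀‖²/σ²); and (ii) for σ_a > 0, setting σ₀² = σ²/D and τ = σ₀²/(σ_a² + σ₀²), ∫_{ℂ^{K×M}} exp(−‖Y − V A‖²/σ² − ‖A‖²/σ_a²) dA = (π τ σ_a²)^{KM} · exp(−(‖H₀‖² + τ‖V A₀‖²)/σ²). -/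
open Matrix MeasureTheory

/-- The squared Frobenius (Hilbert–Schmidt) norm `‖M‖² = Tr(Mᴴ M)` of a complex matrix. -/
noncomputable def frobSq {d m : ℕ} (M : Matrix (Fin d) (Fin m) ℂ) : ℝ :=
  (Matrix.trace (Mᴴ * M)).re

lemma frobSq_eq_sum {d m : ℕ} (M : Matrix (Fin d) (Fin m) ℂ) :
    frobSq M = ∑ i, ∑ j, ‖M i j‖^2 := by
  rw [Finset.sum_comm]
  unfold frobSq
  rw [Matrix.trace, Complex.re_sum]
  refine Finset.sum_congr rfl fun j _ => ?_
  rw [Matrix.diag_apply, Matrix.mul_apply, Complex.re_sum]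
  refine Finset.sum_congr rfl fun i _ => ?_
  rw [Matrix.conjTranspose_apply,
    show (star (M i j)) * M i j = ((Complex.normSq (M i j) : ℝ) : ℂ) from
      Complex.normSq_eq_conj_mul_self.symm,
    Complex.ofReal_re, Complex.normSq_eq_norm_sq]

lemma frob_split {D M K : ℕ} (V : Matrix (Fin D) (Fin K) ℂ)
    (hV : Vᴴ * V = ((D : ℕ) : ℂ) • (1 : Matrix (Fin K) (Fin K) ℂ))
    (H : Matrix (Fin D) (Fin M) ℂ) (B : Matrix (Fin K) (Fin M) ℂ)
    (hVH : Vᴴ * H = 0) :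
    frobSq (H - V * B) = frobSq H + (D : ℝ) * frobSq B := by
  have hHV : Hᴴ * V = 0 := by
    have := congrArg Matrix.conjTranspose hVH
    simpa [Matrix.conjTranspose_mul] using this
  have expand : (H - V * B)ᴴ * (H - V * B)
      = Hᴴ * H + ((D : ℕ) : ℂ) • (Bᴴ * B) := by
    rw [Matrix.conjTranspose_sub, Matrix.conjTranspose_mul, Matrix.sub_mul,
      Matrix.mul_sub, Matrix.mul_sub]
    rw [← Matrix.mul_assoc, hHV, Matrix.mul_assoc Bᴴ Vᴴ H, hVH,
      show Bᴴ * Vᴴ * (V * B) = Bᴴ * (Vᴴ * V) * B by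
        rw [Matrix.mul_assoc, Matrix.mul_assoc, Matrix.mul_assoc],
      hV]
    simp [Matrix.mul_smul, Matrix.smul_mul, Matrix.mul_assoc]
  unfold frobSq
  rw [expand, Matrix.trace_add, Matrix.trace_smul]
  simp [Complex.add_re, Complex.smul_re]

lemma frobSq_V_mul {D M K : ℕ} (V : Matrix (Fin D) (Fin K) ℂ)
    (hV : Vᴴ * V = ((D : ℕ) : ℂ) • (1 : Matrix (Fin K) (Fin K) ℂ))
    (B : Matrix (Fin K) (Fin M) ℂ) :
    frobSq (V * B) = (D : ℝ) * frobSq B := by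
  have expand : (V * B)ᴴ * (V * B) = ((D : ℕ) : ℂ) • (Bᴴ * B) := by
    rw [Matrix.conjTranspose_mul,
      show Bᴴ * Vᴴ * (V * B) = Bᴴ * (Vᴴ * V) * B by
        rw [Matrix.mul_assoc, Matrix.mul_assoc, Matrix.mul_assoc],
      hV]
    simp [Matrix.mul_smul, Matrix.smul_mul, Matrix.mul_assoc]
  unfold frobSq
  rw [expand, Matrix.trace_smul]
  simp [Complex.smul_re]

lemma gauss1 (b : ℝ) (hb : 0 < b) (c : ℂ) :
    ∫ z : ℂ, Real.exp (-(b * ‖z - c‖^2)) = Real.pi / b := by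
  have h := integral_sub_right_eq_self (μ := (volume : Measure ℂ))
    (fun z : ℂ => Real.exp (-(b * ‖z‖^2))) c
  rw [h]
  have h2 := GaussianFourier.integral_rexp_neg_mul_sq_norm (V := ℂ) hb
  simp only [neg_mul] at h2 ⊢
  rw [h2, Complex.finrank_real_complex]
  norm_num

lemma gaussM (K M : ℕ) (b : ℝ) (hb : 0 < b) (C : Matrix (Fin K) (Fin M) ℂ) :
    ∫ A : Fin K → Fin M → ℂ,
      Real.exp (-(b * ∑ i, ∑ j, ‖A i j - C i j‖^2)) = (Real.pi / b) ^ (K * M) := by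
  have h1 : ∀ A : Fin K → Fin M → ℂ,
      Real.exp (-(b * ∑ i, ∑ j, ‖A i j - C i j‖^2))
        = ∏ i, ∏ j, Real.exp (-(b * ‖A i j - C i j‖^2)) := by
    intro A
    rw [show -(b * ∑ i, ∑ j, ‖A i j - C i j‖^2) = ∑ i, ∑ j, -(b * ‖A i j - C i j‖^2) by
      simp [Finset.mul_sum]]
    rw [Real.exp_sum]
    exact Finset.prod_congr rfl fun i _ => Real.exp_sum _ _
  rw [show (fun A : Fin K → Fin M → ℂ => Real.exp (-(b * ∑ i, ∑ j, ‖A i j - C i j‖^2)))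
      = fun A => ∏ i, (fun i (r : Fin M → ℂ) => ∏ j, Real.exp (-(b * ‖r j - C i j‖^2))) i (A i)
      from funext h1]
  erw [MeasureTheory.integral_fintype_prod_eq_prod
    (fun i (r : Fin M → ℂ) => ∏ j, Real.exp (-(b * ‖r j - C i j‖^2)))]
  have h2 : ∀ i : Fin K,
      (∫ r : Fin M → ℂ, ∏ j, Real.exp (-(b * ‖r j - C i j‖^2))) = (Real.pi / b) ^ M := by
    intro i
    erw [MeasureTheory.integral_fintype_prod_eq_prod
      (fun j (z : ℂ) => Real.exp (-(b * ‖z - C i j‖^2)))]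
    rw [Finset.prod_congr rfl fun j _ => gauss1 b hb (C i j)]
    simp [div_pow]
  rw [Finset.prod_congr rfl fun i _ => h2 i]
  simp [mul_comm K M, pow_mul]

lemma norm_sq_c (u : ℂ) : ‖u‖^2 = u.re^2 + u.im^2 := by
  rw [show ‖u‖^2 = Complex.normSq u by exact Complex.sq_norm u,
    Complex.normSq_apply]
  ring

lemma complete_sq (p q : ℝ) (hp : 0 < p) (hq : 0 < q) (z w : ℂ) :
    p * ‖z - w‖^2 + q * ‖z‖^2
      = (p+q) * ‖z - (p/(p+q)) • w‖^2 + (p*q/(p+q)) * ‖w‖^2 := by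
  have hpq : p + q ≠ 0 := by positivity
  simp only [norm_sq_c, Complex.sub_re, Complex.sub_im, Complex.real_smul,
    Complex.mul_re, Complex.mul_im, Complex.ofReal_re, Complex.ofReal_im]
  field_simp
  ring

/-- Gaussian matrix integrals over `ℂ^{K×M}` (with Lebesgue measure, identifying
`ℂ^{K×M} ≅ ℝ^{2KM}`): with `VᴴV = D·I`, `A₀ = VᴴY/D` and `H₀ = Y - V A₀`,
(i) `∫ exp(-‖Y - V A‖²/σ²) dA = (πσ²/D)^{KM} exp(-‖H₀‖²/σ²)`, and
(ii) with `σ₀² = σ²/D` and `τ = σ₀²/(σ_a² + σ₀²)`,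
`∫ exp(-‖Y - V A‖²/σ² - ‖A‖²/σ_a²) dA = (πτσ_a²)^{KM} exp(-(‖H₀‖² + τ‖V A₀‖²)/σ²)`. -/
theorem integral_gaussian_matrix
    (D M K : ℕ) (hD : 0 < D)
    (Y : Matrix (Fin D) (Fin M) ℂ) (V : Matrix (Fin D) (Fin K) ℂ)
    (hV : Vᴴ * V = ((D : ℕ) : ℂ) • (1 : Matrix (Fin K) (Fin K) ℂ))
    (σ : ℝ) (hσ : 0 < σ)
    (A₀ H₀ : Matrix _ _ ℂ)
    (hA₀ : A₀ = ((1 : ℂ) / (D : ℂ)) • (Vᴴ * Y)) (hH₀ : H₀ = Y - V * A₀) :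
    (∫ A : Fin K → Fin M → ℂ,
        Real.exp (-(frobSq (Y - V * Matrix.of A)) / σ ^ 2) =
      (Real.pi * σ ^ 2 / D) ^ (K * M) * Real.exp (-(frobSq H₀) / σ ^ 2)) ∧
    ∀ σa : ℝ, 0 < σa →
      ∀ σ₀sq τ : ℝ, σ₀sq = σ ^ 2 / D → τ = σ₀sq / (σa ^ 2 + σ₀sq) →
        ∫ A : Fin K → Fin M → ℂ,
            Real.exp (-(frobSq (Y - V * Matrix.of A)) / σ ^ 2
              - frobSq (Matrix.of A) / σa ^ 2) =
          (Real.pi * τ * σa ^ 2) ^ (K * M) *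
            Real.exp (-(frobSq H₀ + τ * frobSq (V * A₀)) / σ ^ 2) := by
  have hD0 : (D : ℝ) ≠ 0 := Nat.cast_ne_zero.mpr hD.ne'
  have hDC : ((D : ℕ) : ℂ) ≠ 0 := Nat.cast_ne_zero.mpr hD.ne'
  have hσ0 : σ ≠ 0 := hσ.ne'
  have hVH : Vᴴ * H₀ = 0 := by
    rw [hH₀, Matrix.mul_sub, hA₀, ← Matrix.mul_assoc, hV]
    rw [Matrix.smul_mul, Matrix.one_mul, smul_smul,
      show ((D : ℕ) : ℂ) * ((1 : ℂ) / (D : ℂ)) = 1 by field_simp, one_smul, sub_self]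
  have key : ∀ A : Matrix (Fin K) (Fin M) ℂ,
      frobSq (Y - V * A) = frobSq H₀ + (D : ℝ) * frobSq (A - A₀) := by
    intro A
    have hYA : Y - V * A = H₀ - V * (A - A₀) := by
      rw [hH₀, Matrix.mul_sub]
      abel
    rw [hYA, frob_split V hV H₀ (A - A₀) hVH]
  have hVA₀ : frobSq (V * A₀) = (D : ℝ) * frobSq A₀ := frobSq_V_mul V hV A₀
  constructor
  · -- part (i)
    have hb : 0 < (D : ℝ) / σ ^ 2 := by positivity
    have hfun : (fun A : Fin K → Fin M → ℂ =>
        Real.exp (-(frobSq (Y - V * Matrix.of A)) / σ ^ 2))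
        = fun A => Real.exp (-(frobSq H₀) / σ ^ 2) *
            Real.exp (-(((D : ℝ) / σ ^ 2) * ∑ i, ∑ j, ‖A i j - A₀ i j‖^2)) := by
      funext A
      rw [← Real.exp_add]
      congr 1
      rw [key (Matrix.of A), frobSq_eq_sum (Matrix.of A - A₀)]
      have hentry : ∀ i j, (Matrix.of A - A₀) i j = A i j - A₀ i j := fun i j => rfl
      simp only [hentry]
      ring
    rw [hfun]
    rw [MeasureTheory.integral_const_mul]
    rw [gaussM K M _ hb A₀]
    rw [show Real.pi / ((D : ℝ) / σ ^ 2) = Real.pi * σ ^ 2 / D by field_simp]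
    ring
  · -- part (ii)
    intro σa hσa σ₀sq τ hσ₀sq hτ
    have hσa0 : σa ≠ 0 := hσa.ne'
    have hσ₀pos : 0 < σ₀sq := by rw [hσ₀sq]; positivity
    have hden : σa ^ 2 + σ₀sq ≠ 0 := by positivity
    have hτpos : 0 < τ := by rw [hτ]; positivity
    have hp : 0 < (D : ℝ) / σ ^ 2 := by positivity
    have hq : 0 < (1 : ℝ) / σa ^ 2 := by positivity
    have hb2 : 0 < (D : ℝ) / σ ^ 2 + 1 / σa ^ 2 := by positivity
    have hpq2 : ((D : ℝ) / σ ^ 2) * (1 / σa ^ 2) / ((D : ℝ) / σ ^ 2 + 1 / σa ^ 2)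
        = τ * (D : ℝ) / σ ^ 2 := by
      rw [hτ, hσ₀sq]
      field_simp
    have hpib : Real.pi / ((D : ℝ) / σ ^ 2 + 1 / σa ^ 2) = Real.pi * τ * σa ^ 2 := by
      rw [hτ, hσ₀sq]
      field_simp
    set C2 : Matrix (Fin K) (Fin M) ℂ :=
      (((D : ℝ) / σ ^ 2) / ((D : ℝ) / σ ^ 2 + 1 / σa ^ 2)) • A₀ with hC2
    have hfun : (fun A : Fin K → Fin M → ℂ =>
        Real.exp (-(frobSq (Y - V * Matrix.of A)) / σ ^ 2
          - frobSq (Matrix.of A) / σa ^ 2))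
        = fun A => Real.exp (-(frobSq H₀ + τ * frobSq (V * A₀)) / σ ^ 2) *
            Real.exp (-(((D : ℝ) / σ ^ 2 + 1 / σa ^ 2) * ∑ i, ∑ j, ‖A i j - C2 i j‖^2)) := by
      funext A
      rw [← Real.exp_add]
      congr 1
      rw [key (Matrix.of A), hVA₀, frobSq_eq_sum (Matrix.of A - A₀),
        frobSq_eq_sum (Matrix.of A), frobSq_eq_sum A₀]
      have hentry : ∀ i j, (Matrix.of A - A₀) i j = A i j - A₀ i j := fun i j => rfl
      have hentry2 : ∀ i j, Matrix.of A i j = A i j := fun i j => rfl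
      simp only [hentry, hentry2]
      have hsum : ((D : ℝ) / σ ^ 2) * (∑ i, ∑ j, ‖A i j - A₀ i j‖^2)
            + (1 / σa ^ 2) * (∑ i, ∑ j, ‖A i j‖^2)
          = ((D : ℝ) / σ ^ 2 + 1 / σa ^ 2) * (∑ i, ∑ j, ‖A i j - C2 i j‖^2)
            + (((D : ℝ) / σ ^ 2) * (1 / σa ^ 2) / ((D : ℝ) / σ ^ 2 + 1 / σa ^ 2))
              * (∑ i, ∑ j, ‖A₀ i j‖^2) := by
        calc ((D : ℝ) / σ ^ 2) * (∑ i, ∑ j, ‖A i j - A₀ i j‖^2)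
              + (1 / σa ^ 2) * (∑ i, ∑ j, ‖A i j‖^2)
            = ∑ i, ∑ j, (((D : ℝ) / σ ^ 2) * ‖A i j - A₀ i j‖^2
                + (1 / σa ^ 2) * ‖A i j‖^2) := by
              simp [Finset.mul_sum, Finset.sum_add_distrib]
          _ = ∑ i, ∑ j, (((D : ℝ) / σ ^ 2 + 1 / σa ^ 2) * ‖A i j - C2 i j‖^2
                + (((D : ℝ) / σ ^ 2) * (1 / σa ^ 2) / ((D : ℝ) / σ ^ 2 + 1 / σa ^ 2))
                  * ‖A₀ i j‖^2) := by
              refine Finset.sum_congr rfl fun i _ => Finset.sum_congr rfl fun j _ => ?_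
              rw [show C2 i j = (((D : ℝ) / σ ^ 2) / ((D : ℝ) / σ ^ 2 + 1 / σa ^ 2)) • A₀ i j
                from rfl]
              exact complete_sq _ _ hp hq (A i j) (A₀ i j)
          _ = _ := by
              simp [Finset.mul_sum, Finset.sum_add_distrib]
      linear_combination (-1 : ℝ) * hsum - (∑ i, ∑ j, ‖A₀ i j‖^2) * hpq2
    rw [hfun]
    rw [MeasureTheory.integral_const_mul]
    rw [gaussM K M _ hb2 C2]
    rw [hpib]
    ring
end
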